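/- arXiv:1804.02482 — 4 statements merged into one kernel-verified Lean document; each statement's English description precedes it below -/
import Mathlib

section
/- (Lemma B.1) Let $r_1 \ge 2$ and $r_2 \ge 1$ be integers with $r_2 \le \frac{2}{3}\binom{r_1}{2}$, and set $A = \binom{r_1}{2}$. Then the set $\mathcal{H}_1$ of vectors in $\{-1, 0, 1\}^{A}$ having exactly $r_2$ nonzero coordinates contains a subset whose cardinality is at least $\exp\big(\frac{r_2}{2}\log\frac{A - r_2/2}{r_2}\big)$ and whose elements have pairwise Hamming distance strictly greater than $r_2/2$. -/
noncomputable section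

/-- Hamming distance between two vectors: the number of coordinates where they differ. -/
def hamming {ι : Type*} (v w : ι → ℝ) : ℕ := Nat.card {i // v i ≠ w i}

/-- ℓ0 norm: the number of nonzero coordinates. -/
def l0 {ι : Type*} (v : ι → ℝ) : ℕ := Nat.card {i // v i ≠ 0}

open Finset Real

section Helpers

lemma two_choose_le {A j : ℕ} (h : 3*j + 2 ≤ A) : 2 * A.choose j ≤ A.choose (j+1) := by
  have hkey := Nat.choose_succ_right_eq A j
  have h2 : 2 * (j+1) ≤ A - j := by omega
  have : 2 * A.choose j * (j+1) ≤ A.choose (j+1) * (j+1) := by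
    rw [hkey]
    calc 2 * A.choose j * (j+1) = A.choose j * (2*(j+1)) := by ring
    _ ≤ A.choose j * (A - j) := Nat.mul_le_mul_left _ h2
  exact Nat.le_of_mul_le_mul_right this (by omega)

lemma sum_choose_le (A : ℕ) : ∀ m : ℕ, 3*m ≤ A → ∑ k ∈ range (m+1), A.choose k ≤ 2 * A.choose m := by
  intro m
  induction m with
  | zero => simp
  | succ j ih =>
    intro h
    rw [Finset.sum_range_succ]
    have h1 : 2 * A.choose j ≤ A.choose (j+1) := two_choose_le (by omega)
    have h2 := ih (by omega)
    omega

lemma choose_mul_pow (A r2 m : ℕ) (hrA : r2 ≤ A) :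
    ∀ j, m + j ≤ r2 → A.choose m * (A - r2 + 1)^j ≤ A.choose (m+j) * r2^j := by
  intro j
  induction j with
  | zero => simp
  | succ j ih =>
    intro h
    have ih' := ih (by omega)
    have hkey := Nat.choose_succ_right_eq A (m+j)
    have hmul : (A - r2 + 1) * (m+j+1) ≤ (A - (m+j)) * r2 :=
      Nat.mul_le_mul (by omega) (by omega)
    have : A.choose m * (A - r2 + 1)^(j+1) * (m+j+1) ≤ A.choose (m+(j+1)) * r2^(j+1) * (m+j+1) := by
      calc A.choose m * (A - r2 + 1)^(j+1) * (m+j+1)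
          = (A.choose m * (A - r2 + 1)^j) * ((A - r2 + 1) * (m+j+1)) := by ring
        _ ≤ (A.choose (m+j) * r2^j) * ((A - (m+j)) * r2) := Nat.mul_le_mul ih' hmul
        _ = (A.choose (m+j) * (A - (m+j))) * r2^(j+1) := by ring
        _ = (A.choose (m+j+1) * (m+j+1)) * r2^(j+1) := by rw [← hkey]
        _ = A.choose (m+(j+1)) * r2^(j+1) * (m+j+1) := by ring_nf
    exact Nat.le_of_mul_le_mul_right this (by omega)

lemma key_real (A r2 : ℕ) (h2 : 1 ≤ r2) (h3 : 3*r2 ≤ 2*A) :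
    Real.exp ((r2:ℝ)/2 * Real.log (((A:ℝ) - (r2:ℝ)/2)/(r2:ℝ))) *
      (2 * (A.choose (r2/2) : ℝ) * 2^(r2/2)) ≤ (A.choose r2 : ℝ) * 2^r2 := by
  set m : ℕ := r2/2 with hm
  set s : ℕ := r2 - m with hs
  have hms : m + s = r2 := by omega
  have hrA : r2 ≤ A := by omega
  have hr2pos : (0:ℝ) < r2 := by exact_mod_cast h2
  have haR : 3*(r2:ℝ) ≤ 2*(A:ℝ) := by exact_mod_cast h3
  set a : ℝ := (A:ℝ) with ha
  set c : ℝ := (r2:ℝ)/2 with hc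
  set y : ℝ := (a - c)/(r2:ℝ) with hy
  set u : ℝ := 2*(a - (r2:ℝ) + 1)/(r2:ℝ) with hu
  have hy1 : 1 ≤ y := by
    rw [hy, le_div_iff₀ hr2pos]
    rw [hc]; linarith
  have hypos : 0 < y := lt_of_lt_of_le one_pos hy1
  have hu1 : 1 ≤ u := by
    rw [hu, le_div_iff₀ hr2pos]; linarith
  have hexp : Real.exp (c * Real.log y) = y ^ c := by
    rw [Real.rpow_def_of_pos hypos, mul_comm]
  have key1 : y ^ c * 2 ≤ u ^ (s:ℝ) := by
    rcases eq_or_lt_of_le h2 with h1' | h1'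
    · -- r2 = 1
      have hr1 : r2 = 1 := h1'.symm
      have hs1 : s = 1 := by omega
      have hc' : c = 1/2 := by rw [hc, hr1]; norm_num
      have hA2 : (2:ℝ) ≤ a := by
        have h' : 2 ≤ A := by omega
        rw [ha]; exact_mod_cast h'
      have hyv : y = a - 1/2 := by rw [hy, hr1, hc']; push_cast; ring
      have huv : u = 2*a := by rw [hu, hr1]; push_cast; ring
      have h1 : y ≤ a^2 := by rw [hyv]; nlinarith
      have h2' : y ^ c ≤ a := by
        have hle := Real.rpow_le_rpow hypos.le h1 (by rw [hc']; norm_num : (0:ℝ) ≤ c)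
        calc y ^ c ≤ (a^2) ^ c := hle
          _ = a := by
            rw [hc', ← Real.rpow_natCast a 2, ← Real.rpow_mul (by linarith)]
            norm_num
      rw [hs1, huv]
      calc y ^ c * 2 ≤ a * 2 := by linarith
        _ = (2*a) ^ ((1:ℕ):ℝ) := by rw [Nat.cast_one, Real.rpow_one]; ring
    · -- r2 ≥ 2
      have hc1 : 1 ≤ c := by
        have h' : (2:ℝ) ≤ r2 := by exact_mod_cast h1'
        rw [hc]; linarith
      have hcpos : 0 < c := lt_of_lt_of_le one_pos hc1
      have hr2c : (r2:ℝ) = 2*c := by rw [hc]; ring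
      have h3ca : 3*c ≤ a := by rw [hr2c] at haR; linarith
      have huy : y * (1 + 1/c) ≤ u := by
        rw [hy, hu, hr2c, div_mul_eq_mul_div,
          div_le_div_iff_of_pos_right (by positivity : (0:ℝ) < 2*c)]
        have e : (a - c)*(1 + 1/c) = (a - c)*(c+1)/c := by field_simp
        rw [e, div_le_iff₀ hcpos]
        nlinarith [mul_nonneg (sub_nonneg.2 hc1) (sub_nonneg.2 h3ca)]
      have hbern : (2:ℝ) ≤ (1 + 1/c) ^ c := by
        have h0 : (0:ℝ) ≤ 1/c := by positivity
        have hb := one_add_mul_self_le_rpow_one_add (by linarith : (-1:ℝ) ≤ 1/c) hc1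
        calc (2:ℝ) = 1 + c * (1/c) := by rw [mul_one_div, div_self hcpos.ne']; norm_num
          _ ≤ (1 + 1/c) ^ c := hb
      have hstep : y ^ c * 2 ≤ u ^ c := by
        have hyc : (0:ℝ) ≤ y ^ c := (Real.rpow_pos_of_pos hypos c).le
        calc y ^ c * 2 ≤ y ^ c * (1 + 1/c)^c := by
              exact mul_le_mul_of_nonneg_left hbern hyc
          _ = (y * (1 + 1/c)) ^ c := (Real.mul_rpow hypos.le (by positivity)).symm
          _ ≤ u ^ c := Real.rpow_le_rpow (by positivity) huy hcpos.le
      calc y ^ c * 2 ≤ u ^ c := hstep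
        _ ≤ u ^ (s:ℝ) := by
            refine Real.rpow_le_rpow_of_exponent_le hu1 ?_
            have h2s : r2 ≤ 2*s := by omega
            have : (r2:ℝ) ≤ 2*(s:ℝ) := by exact_mod_cast h2s
            rw [hc]; linarith
  have key2 : ((A - r2 + 1 : ℕ):ℝ)^s * (A.choose m : ℝ) ≤ (A.choose r2 : ℝ) * (r2:ℝ)^s := by
    have hnat := choose_mul_pow A r2 m hrA s (by omega)
    rw [hms] at hnat
    calc ((A - r2 + 1 : ℕ):ℝ)^s * (A.choose m : ℝ) = ((A.choose m * (A - r2 + 1)^s : ℕ) : ℝ) := by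
          push_cast; ring
      _ ≤ ((A.choose r2 * r2^s : ℕ) : ℝ) := by exact_mod_cast hnat
      _ = (A.choose r2 : ℝ) * (r2:ℝ)^s := by push_cast; ring
  have hcast : (a - (r2:ℝ) + 1) = ((A - r2 + 1 : ℕ):ℝ) := by
    rw [ha]; push_cast [Nat.cast_sub hrA]; ring
  have hus : u ^ (s:ℝ) = 2^s * ((A - r2 + 1 : ℕ):ℝ)^s / (r2:ℝ)^s := by
    rw [Real.rpow_natCast, hu, div_pow, mul_pow, hcast, mul_div_assoc]
  rw [hexp]
  have hX : (0:ℝ) ≤ (A.choose m : ℝ) * 2^m := by positivity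
  have e1 : y ^ c * (2 * (A.choose m : ℝ) * 2^m) = (y ^ c * 2) * ((A.choose m : ℝ) * 2^m) := by
    ring
  rw [e1]
  have e2 : (y^c*2) * ((A.choose m:ℝ) * 2^m) ≤ u^(s:ℝ) * ((A.choose m:ℝ) * 2^m) :=
    mul_le_mul_of_nonneg_right key1 hX
  refine e2.trans ?_
  rw [hus, div_mul_eq_mul_div, div_le_iff₀ (by positivity : (0:ℝ) < (r2:ℝ)^s)]
  have hY : (0:ℝ) ≤ (2:ℝ)^s * 2^m := by positivity
  calc 2^s * ((A - r2 + 1:ℕ):ℝ)^s * ((A.choose m:ℝ) * 2^m)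
      = (((A - r2 + 1:ℕ):ℝ)^s * (A.choose m:ℝ)) * (2^s * 2^m) := by ring
    _ ≤ ((A.choose r2:ℝ) * (r2:ℝ)^s) * (2^s * 2^m) := mul_le_mul_of_nonneg_right key2 hY
    _ = (A.choose r2:ℝ) * 2^r2 * (r2:ℝ)^s := by
        rw [← pow_add, show s + m = r2 by omega]; ring

def sig : Fin 3 → ℝ := ![(-1), 0, 1]

lemma sig_inj : Function.Injective sig := by
  intro x y h
  fin_cases x <;> fin_cases y <;> simp_all [sig] <;> norm_num at h

lemma sig_vals (x : Fin 3) : sig x = -1 ∨ sig x = 0 ∨ sig x = 1 := by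
  fin_cases x <;> simp [sig]

lemma sig_ne_zero_iff (x : Fin 3) : sig x ≠ 0 ↔ x ≠ 1 := by
  fin_cases x <;> simp [sig]

section Phi
variable {n r2 : ℕ}

/-- encode (support, signs) as a function to `Fin 3`; `1` encodes value `0`. -/
def phi (p : {s : Finset (Fin n) // s.card = r2} × (Fin r2 → Bool)) : Fin n → Fin 3 :=
  fun i => if h : i ∈ p.1.1 then (if p.2 ((p.1.1.orderIsoOfFin p.1.2).symm ⟨i, h⟩) then 2 else 0) else 1

lemma phi_supp (p : {s : Finset (Fin n) // s.card = r2} × (Fin r2 → Bool)) :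
    univ.filter (fun i => phi p i ≠ 1) = p.1.1 := by
  ext i
  by_cases h : i ∈ p.1.1 <;> simp [phi, h] <;> split <;> decide

lemma phi_inj : Function.Injective (phi (n := n) (r2 := r2)) := by
  rintro ⟨⟨s, hs⟩, b⟩ ⟨⟨s', hs'⟩, b'⟩ h
  have hss : s = s' := by
    have := congrArg (fun f => univ.filter (fun i => f i ≠ (1 : Fin 3))) h
    simpa [phi_supp] using this
  subst hss
  have hb : b = b' := by
    funext j
    have := congrFun h ((s.orderIsoOfFin hs) j : Fin n)
    have hmem : ((s.orderIsoOfFin hs) j : Fin n) ∈ s := ((s.orderIsoOfFin hs) j).2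
    simp only [phi, dif_pos hmem] at this
    rw [show (⟨((s.orderIsoOfFin hs) j : Fin n), hmem⟩ : {x // x ∈ s}) = (s.orderIsoOfFin hs) j
        from Subtype.ext rfl] at this
    rw [OrderIso.symm_apply_apply] at this
    rcases Bool.eq_false_or_eq_true (b j) with h1 | h1 <;>
      rcases Bool.eq_false_or_eq_true (b' j) with h2 | h2 <;> simp_all
  rw [hb]

end Phi

lemma tri_eq {x y z : ℝ} (hx : x = -1 ∨ x = 0 ∨ x = 1) (hy : y = -1 ∨ y = 0 ∨ y = 1)
    (hz : z = -1 ∨ z = 0 ∨ z = 1) (h1 : x ≠ z) (h2 : y ≠ z)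
    (h3 : (if z = 0 then decide (x = 1) else decide (x = 0))
        = (if z = 0 then decide (y = 1) else decide (y = 0))) :
    x = y := by
  rcases hx with rfl|rfl|rfl <;> rcases hy with rfl|rfl|rfl <;> rcases hz with rfl|rfl|rfl <;>
    first
      | rfl
      | (exact absurd rfl h1)
      | (exact absurd rfl h2)
      | (exfalso; norm_num at h3)

/-- nth element of a finset, as an option -/
def elt {n : ℕ} (D : Finset (Fin n)) (j : ℕ) : Option (Fin n) :=
  if h : j < D.card then some ((D.orderIsoOfFin rfl) ⟨j, h⟩ : {x // x ∈ D}) else none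

lemma ball_card_le {n : ℕ} (m : ℕ) (w : Fin n → ℝ) (hw : ∀ i, w i = -1 ∨ w i = 0 ∨ w i = 1)
    (S : Finset (Fin n → ℝ))
    (hS : ∀ v ∈ S, (∀ i, v i = -1 ∨ v i = 0 ∨ v i = 1) ∧
      (univ.filter (fun i => v i ≠ w i)).card ≤ m) :
    S.card ≤ (univ.filter (fun D : Finset (Fin n) => D.card ≤ m)).card * 2^m := by
  classical
  set T : Finset (Finset (Fin n) × (Fin m → Bool)) :=
    (univ.filter (fun D : Finset (Fin n) => D.card ≤ m)) ×ˢ univ with hT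
  have hTcard : T.card = (univ.filter (fun D : Finset (Fin n) => D.card ≤ m)).card * 2^m := by
    rw [hT, Finset.card_product, Finset.card_univ, Fintype.card_fun]
    simp
  rw [← hTcard]
  set Dof : (Fin n → ℝ) → Finset (Fin n) := fun v => univ.filter (fun i => v i ≠ w i) with hDof
  set ψ : (Fin n → ℝ) → Finset (Fin n) × (Fin m → Bool) := fun v =>
    (Dof v, fun j => match elt (Dof v) j.1 with
      | some i => (if w i = 0 then decide (v i = 1) else decide (v i = 0))
      | none => false) with hψ
  apply Finset.card_le_card_of_injOn ψ
  · intro v hv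
    rw [hT, Finset.mem_coe, Finset.mem_product]
    refine ⟨Finset.mem_filter.2 ⟨Finset.mem_univ _, (hS v hv).2⟩, Finset.mem_univ _⟩
  · intro v hv v' hv' heq
    have hD : Dof v = Dof v' := congrArg Prod.fst heq
    have hb := congrArg Prod.snd heq
    funext i
    by_cases hi : i ∈ Dof v
    · have hi' : i ∈ Dof v' := hD ▸ hi
      have hDm : (Dof v).card ≤ m := (hS v hv).2
      set k : Fin (Dof v).card := ((Dof v).orderIsoOfFin rfl).symm ⟨i, hi⟩ with hk
      have hjm : (k : ℕ) < m := lt_of_lt_of_le k.2 hDm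
      have helt : elt (Dof v) k.1 = some i := by
        rw [elt, dif_pos k.2]
        congr 1
        have : (⟨k.1, k.2⟩ : Fin (Dof v).card) = k := rfl
        rw [this, hk, OrderIso.apply_symm_apply]
      have hbj := congrFun hb ⟨k.1, hjm⟩
      simp only [hψ] at hbj
      rw [← hD] at hbj
      rw [helt] at hbj
      have hlt : (if w i = 0 then decide (v i = 1) else decide (v i = 0))
          = (if w i = 0 then decide (v' i = 1) else decide (v' i = 0)) := hbj
      have h1 : v i ≠ w i := (Finset.mem_filter.1 hi).2
      have h2 : v' i ≠ w i := (Finset.mem_filter.1 hi').2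
      exact tri_eq ((hS v hv).1 i) ((hS v' hv').1 i) (hw i) h1 h2 hlt
    · have hi' : i ∉ Dof v' := hD ▸ hi
      have e1 : v i = w i := by
        by_contra hne
        exact hi (Finset.mem_filter.2 ⟨Finset.mem_univ _, hne⟩)
      have e2 : v' i = w i := by
        by_contra hne
        exact hi' (Finset.mem_filter.2 ⟨Finset.mem_univ _, hne⟩)
      rw [e1, e2]

lemma card_small_sets (n m : ℕ) :
    (univ.filter (fun D : Finset (Fin n) => D.card ≤ m)).card
      = ∑ k ∈ Finset.range (m+1), n.choose k := by
  classical
  have heq : (univ.filter (fun D : Finset (Fin n) => D.card ≤ m))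
      = (Finset.range (m+1)).biUnion (fun k => Finset.powersetCard k univ) := by
    ext D
    simp only [Finset.mem_filter, Finset.mem_univ, true_and, Finset.mem_biUnion,
      Finset.mem_range, Finset.mem_powersetCard]
    constructor
    · intro h; exact ⟨D.card, by omega, Finset.subset_univ _, rfl⟩
    · rintro ⟨k, hk, -, rfl⟩; omega
  rw [heq, Finset.card_biUnion]
  · apply Finset.sum_congr rfl
    intro k _
    rw [Finset.card_powersetCard, Finset.card_univ, Fintype.card_fin]
  · intro x _ y _ hxy
    apply Finset.disjoint_left.2
    intro D hD hD'
    rw [Finset.mem_powersetCard] at hD hD'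
    exact hxy (hD.2 ▸ hD'.2)

lemma hamming_eq {n : ℕ} (v w : Fin n → ℝ) :
    hamming v w = (univ.filter (fun i => v i ≠ w i)).card := by
  classical
  rw [hamming, Nat.card_eq_fintype_card, Fintype.card_subtype]

lemma hamming_comm {n : ℕ} (v w : Fin n → ℝ) : hamming v w = hamming w v := by
  classical
  rw [hamming_eq, hamming_eq]
  congr 1
  ext i
  simp [ne_comm]

lemma hamming_self {n : ℕ} (v : Fin n → ℝ) : hamming v v = 0 := by
  classical
  rw [hamming_eq]
  simp

end Helpers

/-- Lemma B.1. If `r1 ≥ 2`, `r2 ≥ 1` and `r2 ≤ (2/3) C(r1,2)`, then with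
`A = C(r1,2)`, the set of vectors in `{-1,0,1}^A` with exactly `r2` nonzero coordinates
contains a subset of cardinality at least `exp((r2/2) log((A - r2/2)/r2))` whose elements
have pairwise Hamming distance greater than `r2/2`. -/
theorem packing_subset_interactions (r1 r2 : ℕ) (h1 : 2 ≤ r1) (h2 : 1 ≤ r2)
    (h3 : (r2 : ℝ) ≤ 2 / 3 * (r1.choose 2 : ℝ)) :
    ∃ B : Finset (Fin (r1.choose 2) → ℝ),
      (∀ v ∈ B, (∀ i, v i = -1 ∨ v i = 0 ∨ v i = 1) ∧ l0 v = r2) ∧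
      Real.exp ((r2 : ℝ) / 2 * Real.log (((r1.choose 2 : ℝ) - (r2 : ℝ) / 2) / (r2 : ℝ))) ≤
        (B.card : ℝ) ∧
      ∀ v ∈ B, ∀ w ∈ B, v ≠ w → (r2 : ℝ) / 2 < (hamming v w : ℝ) := by
  classical
  set n : ℕ := r1.choose 2 with hn
  have hAr : 3*r2 ≤ 2*n := by
    have h3' : (3:ℝ)*(r2:ℝ) ≤ 2*(n:ℝ) := by rw [hn]; push_cast; linarith
    exact_mod_cast h3'
  set m : ℕ := r2/2 with hm
  have h3mn : 3*m ≤ n := by omega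
  have hrn : r2 ≤ n := by omega
  -- the ambient set H1
  set toV : (Fin n → Fin 3) → (Fin n → ℝ) := fun f i => sig (f i) with htoV
  have toV_inj : Function.Injective toV := by
    intro f g h
    funext i
    exact sig_inj (congrFun h i)
  set H1' : Finset (Fin n → Fin 3) :=
    univ.filter (fun f => (univ.filter (fun i => f i ≠ 1)).card = r2) with hH1'
  set H1 : Finset (Fin n → ℝ) := H1'.image toV with hH1
  have l0_eq : ∀ (f : Fin n → Fin 3), l0 (toV f) = (univ.filter (fun i => f i ≠ 1)).card := by
    intro f
    rw [l0, Nat.card_eq_fintype_card, Fintype.card_subtype]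
    congr 1
    apply Finset.filter_congr
    intro i _
    simp only [htoV]
    rw [sig_ne_zero_iff]
  have memH1 : ∀ v ∈ H1, (∀ i, v i = -1 ∨ v i = 0 ∨ v i = 1) ∧ l0 v = r2 := by
    intro v hv
    rw [hH1, Finset.mem_image] at hv
    obtain ⟨f, hf, rfl⟩ := hv
    rw [hH1', Finset.mem_filter] at hf
    exact ⟨fun i => sig_vals (f i), by rw [l0_eq]; exact hf.2⟩
  -- lower bound on H1.card
  have hH1card : n.choose r2 * 2^r2 ≤ H1.card := by
    have hc1 : H1.card = H1'.card := Finset.card_image_of_injective _ toV_inj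
    have himg : univ.image (phi (n := n) (r2 := r2)) ⊆ H1' := by
      intro f hf
      rw [Finset.mem_image] at hf
      obtain ⟨p, -, rfl⟩ := hf
      rw [hH1', Finset.mem_filter]
      exact ⟨Finset.mem_univ _, by rw [phi_supp]; exact p.1.2⟩
    have hcimg : (univ.image (phi (n := n) (r2 := r2))).card = n.choose r2 * 2^r2 := by
      rw [Finset.card_image_of_injective _ phi_inj, Finset.card_univ]
      rw [Fintype.card_prod, Fintype.card_finset_len, Fintype.card_fun]
      simp
    rw [hc1, ← hcimg]
    exact Finset.card_le_card himg
  -- maximal packing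
  set PP : Finset (Finset (Fin n → ℝ)) :=
    H1.powerset.filter (fun B => ∀ v ∈ B, ∀ w ∈ B, v ≠ w → m < hamming v w) with hPP
  have hPPne : PP.Nonempty := by
    refine ⟨∅, ?_⟩
    rw [hPP, Finset.mem_filter]
    exact ⟨Finset.mem_powerset.2 (Finset.empty_subset _), by simp⟩
  obtain ⟨B, hBPP, hBmax⟩ := Finset.exists_max_image PP Finset.card hPPne
  rw [hPP, Finset.mem_filter, Finset.mem_powerset] at hBPP
  obtain ⟨hBsub, hBpair⟩ := hBPP
  -- covering property
  have hcover : ∀ v ∈ H1, ∃ w ∈ B, hamming v w ≤ m := by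
    intro v hv
    by_contra hno
    push_neg at hno
    have hvB : v ∉ B := by
      intro hvB
      have := hno v hvB
      rw [hamming_self] at this
      omega
    have hins : insert v B ∈ PP := by
      rw [hPP, Finset.mem_filter, Finset.mem_powerset]
      constructor
      · exact Finset.insert_subset hv hBsub
      · intro x hx y hy hxy
        rcases Finset.mem_insert.1 hx with rfl | hx' <;>
          rcases Finset.mem_insert.1 hy with rfl | hy'
        · exact absurd rfl hxy
        · exact hno y hy'
        · rw [hamming_comm]
          exact hno x hx'
        · exact hBpair x hx' y hy' hxy
    have := hBmax _ hins
    rw [Finset.card_insert_of_notMem hvB] at this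
    omega
  -- counting
  set M : ℕ := 2 * n.choose m * 2^m with hM
  have hballs : ∀ w ∈ B, (H1.filter (fun v => hamming v w ≤ m)).card ≤ M := by
    intro w hw
    have hwH1 := memH1 w (hBsub hw)
    have hb := ball_card_le m w hwH1.1 (H1.filter (fun v => hamming v w ≤ m)) ?_
    · refine hb.trans ?_
      rw [card_small_sets, hM]
      have := sum_choose_le n m h3mn
      calc (∑ k ∈ range (m+1), n.choose k) * 2^m ≤ (2 * n.choose m) * 2^m :=
            Nat.mul_le_mul_right _ this
        _ = 2 * n.choose m * 2^m := by ring
    · intro v hv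
      rw [Finset.mem_filter] at hv
      refine ⟨(memH1 v hv.1).1, ?_⟩
      rw [← hamming_eq]
      exact hv.2
  have hcount : H1.card ≤ B.card * M := by
    have hsubset : H1 ⊆ B.biUnion (fun w => H1.filter (fun v => hamming v w ≤ m)) := by
      intro v hv
      obtain ⟨w, hw, hdist⟩ := hcover v hv
      exact Finset.mem_biUnion.2 ⟨w, hw, Finset.mem_filter.2 ⟨hv, hdist⟩⟩
    calc H1.card ≤ (B.biUnion (fun w => H1.filter (fun v => hamming v w ≤ m))).card :=
          Finset.card_le_card hsubset
      _ ≤ ∑ w ∈ B, (H1.filter (fun v => hamming v w ≤ m)).card := Finset.card_biUnion_le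
      _ ≤ ∑ _w ∈ B, M := Finset.sum_le_sum hballs
      _ = B.card * M := by rw [Finset.sum_const, smul_eq_mul]
  -- assemble
  refine ⟨B, fun v hv => memH1 v (hBsub hv), ?_, ?_⟩
  · -- cardinality bound
    have hMpos : (0:ℝ) < (M:ℝ) := by
      rw [hM]
      have : 0 < n.choose m := Nat.choose_pos (by omega)
      positivity
    have hkr := key_real n r2 h2 hAr
    have hchain : Real.exp ((r2:ℝ)/2 * Real.log (((n:ℝ) - (r2:ℝ)/2)/(r2:ℝ))) * (M:ℝ)
        ≤ (B.card : ℝ) * (M:ℝ) := by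
      have hMc : (M:ℝ) = 2 * (n.choose m : ℝ) * 2^m := by rw [hM]; push_cast; ring
      rw [hMc]
      refine hkr.trans ?_
      have hcast2 : ((n.choose r2 * 2^r2 : ℕ) : ℝ) ≤ ((B.card * M : ℕ) : ℝ) := by
        exact_mod_cast le_trans hH1card hcount
      calc (n.choose r2 : ℝ) * 2^r2 = ((n.choose r2 * 2^r2 : ℕ) : ℝ) := by push_cast; ring
        _ ≤ ((B.card * M : ℕ) : ℝ) := hcast2
        _ = (B.card : ℝ) * (2 * (n.choose m : ℝ) * 2^m) := by rw [hM]; push_cast; ring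
    have := le_of_mul_le_mul_right hchain hMpos
    exact this
  · -- distance bound
    intro v hv w hw hvw
    have hd := hBpair v hv w hw hvw
    have : r2 < 2 * hamming v w := by omega
    have hc : (r2:ℝ) < 2 * (hamming v w : ℝ) := by exact_mod_cast this
    linarith

end
end

section
/- (Lemma B.2) Let $p \ge 2$ and $r_1 \ge 1$ be integers with $r_1 \le \frac{2}{3} p$. Then the set $\mathcal{H}_2$ of vectors in $\{-1, 0, 1\}^{p}$ having exactly $r_1$ nonzero coordinates contains a subset whose cardinality is at least $\exp\big(\frac{r_1}{2}\log\frac{p - r_1/2}{r_1}\big)$ and whose elements have pairwise Hamming distance strictly greater than $r_1/2$. -/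
noncomputable section

namespace PackingB2

open Finset

variable {p : ℕ}

/-- support of a ternary vector (coded as `Fin 3`, with `1` coding the value `0`). -/
def supp (σ : Fin p → Fin 3) : Finset (Fin p) := univ.filter (fun i => σ i ≠ 1)

/-- Hamming distance on coded vectors. -/
def dist3 (σ τ : Fin p → Fin 3) : ℕ := (univ.filter (fun i => σ i ≠ τ i)).card

lemma dist3_comm (σ τ : Fin p → Fin 3) : dist3 σ τ = dist3 τ σ := by
  unfold dist3; congr 1; ext i; simp [ne_comm]

lemma dist3_self (σ : Fin p → Fin 3) : dist3 σ σ = 0 := by simp [dist3]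

/-- coded version of `H2`. -/
def H2 (p r1 : ℕ) : Finset (Fin p → Fin 3) := univ.filter (fun σ => (supp σ).card = r1)

lemma card_supp_fiber (S : Finset (Fin p)) :
    ((univ : Finset (Fin p → Fin 3)).filter (fun σ => supp σ = S)).card = 2 ^ S.card := by
  have h3 : ∀ x : Fin 3, x ∈ ({0,2} : Finset (Fin 3)) ↔ x ≠ 1 := by decide
  have key : ((univ : Finset (Fin p → Fin 3)).filter (fun σ => supp σ = S))
      = Fintype.piFinset (fun i => if i ∈ S then ({0,2} : Finset (Fin 3)) else {1}) := by
    ext σ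
    simp only [mem_filter, mem_univ, true_and, Fintype.mem_piFinset]
    rw [Finset.ext_iff]
    apply forall_congr'
    intro i
    by_cases hS : i ∈ S <;> simp [hS, h3, supp]
  rw [key, Fintype.card_piFinset]
  have h2 : ∀ i : Fin p, (if i ∈ S then ({0,2} : Finset (Fin 3)) else {1}).card
      = if i ∈ S then 2 else 1 := by
    intro i; by_cases hS : i ∈ S <;> simp [hS]
  rw [Finset.prod_congr rfl (fun i _ => h2 i), Finset.prod_ite_mem, univ_inter, prod_const]

lemma card_H2 (r1 : ℕ) : (H2 p r1).card = p.choose r1 * 2 ^ r1 := by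
  have hmem : ∀ σ ∈ H2 p r1, supp σ ∈ (univ : Finset (Fin p)).powersetCard r1 := by
    intro σ hσ
    simp only [H2, mem_filter, mem_univ, true_and] at hσ
    rw [mem_powersetCard]
    exact ⟨subset_univ _, hσ⟩
  rw [card_eq_sum_card_fiberwise hmem]
  have hfib : ∀ S ∈ (univ : Finset (Fin p)).powersetCard r1,
      ((H2 p r1).filter (fun σ => supp σ = S)).card = 2 ^ r1 := by
    intro S hS
    rw [mem_powersetCard] at hS
    have heq : (H2 p r1).filter (fun σ => supp σ = S)
        = (univ : Finset (Fin p → Fin 3)).filter (fun σ => supp σ = S) := by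
      ext σ
      simp only [H2, mem_filter, mem_univ, true_and, filter_filter]
      constructor
      · rintro ⟨_, h⟩; exact h
      · intro h; exact ⟨by rw [h, hS.2], h⟩
    rw [heq, card_supp_fiber, hS.2]
  rw [Finset.sum_congr rfl hfib, sum_const, card_powersetCard, card_univ, Fintype.card_fin,
    smul_eq_mul]

/-- volume bound for Hamming balls. -/
def Wvol (p s : ℕ) : ℕ := ∑ j ∈ Finset.range (s+1), p.choose j * 2 ^ j

lemma ball_card_le (w : Fin p → Fin 3) (s : ℕ) :
    ((univ : Finset (Fin p → Fin 3)).filter (fun σ => dist3 σ w ≤ s)).card ≤ Wvol p s := by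
  classical
  set Ball := (univ : Finset (Fin p → Fin 3)).filter (fun σ => dist3 σ w ≤ s) with hBall
  set t : Finset (Finset (Fin p)) :=
    (Finset.range (s+1)).biUnion (fun j => (univ : Finset (Fin p)).powersetCard j) with ht
  have hmem : ∀ σ ∈ Ball, (univ.filter fun i => σ i ≠ w i) ∈ t := by
    intro σ hσ
    simp only [hBall, mem_filter, mem_univ, true_and] at hσ
    simp only [ht, mem_biUnion, mem_range]
    exact ⟨(univ.filter fun i => σ i ≠ w i).card, Nat.lt_succ_of_le hσ,
      by rw [mem_powersetCard]; exact ⟨subset_univ _, rfl⟩⟩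
  calc Ball.card = ∑ D ∈ t, (Ball.filter (fun σ => (univ.filter fun i => σ i ≠ w i) = D)).card :=
        card_eq_sum_card_fiberwise hmem
    _ ≤ ∑ D ∈ t, 2 ^ D.card := by
        apply Finset.sum_le_sum
        intro D _
        have hsub : Ball.filter (fun σ => (univ.filter fun i => σ i ≠ w i) = D)
            ⊆ Fintype.piFinset (fun i => if i ∈ D then ({w i}ᶜ : Finset (Fin 3)) else {w i}) := by
          intro σ hσ
          simp only [mem_filter] at hσ
          rw [Fintype.mem_piFinset]
          intro i
          have hiff : σ i ≠ w i ↔ i ∈ D := by rw [← hσ.2]; simp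
          by_cases hiD : i ∈ D
          · simp only [hiD, if_true, Finset.mem_compl, mem_singleton]
            exact hiff.mpr hiD
          · simp only [hiD, if_false, mem_singleton]
            by_contra hne; exact hiD (hiff.mp hne)
        calc (Ball.filter (fun σ => (univ.filter fun i => σ i ≠ w i) = D)).card
            ≤ (Fintype.piFinset (fun i => if i ∈ D then ({w i}ᶜ : Finset (Fin 3)) else {w i})).card :=
              card_le_card hsub
          _ = 2 ^ D.card := by
              rw [Fintype.card_piFinset]
              have h2 : ∀ i : Fin p, (if i ∈ D then ({w i}ᶜ : Finset (Fin 3)) else {w i}).card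
                  = if i ∈ D then 2 else 1 := by
                intro i
                by_cases hiD : i ∈ D <;> simp [hiD, Finset.card_compl]
              rw [Finset.prod_congr rfl (fun i _ => h2 i), Finset.prod_ite_mem, univ_inter,
                prod_const]
    _ ≤ Wvol p s := by
        rw [ht, Finset.sum_biUnion]
        · apply Finset.sum_le_sum
          intro j _
          have hD : ∀ D ∈ (univ : Finset (Fin p)).powersetCard j, 2 ^ D.card = 2 ^ j := by
            intro D hD
            rw [mem_powersetCard] at hD
            rw [hD.2]
          rw [Finset.sum_congr rfl hD, sum_const, card_powersetCard, card_univ,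
            Fintype.card_fin, smul_eq_mul]
        · intro a _ b _ hab
          simp only [Function.onFun]
          rw [Finset.disjoint_left]
          intro D hDa hDb
          rw [mem_powersetCard] at hDa hDb
          exact hab (hDa.2 ▸ hDb.2 ▸ rfl)

lemma exists_max_packing (r1 s : ℕ) :
    ∃ A ⊆ H2 p r1,
      (∀ σ ∈ A, ∀ τ ∈ A, σ ≠ τ → s < dist3 σ τ) ∧
      (H2 p r1).card ≤ A.card * Wvol p s := by
  classical
  set P := ((H2 p r1).powerset).filter
      (fun A => ∀ σ ∈ A, ∀ τ ∈ A, σ ≠ τ → s < dist3 σ τ) with hP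
  have hPne : P.Nonempty := ⟨∅, by simp [hP]⟩
  obtain ⟨A, hAP, hAmax⟩ := P.exists_max_image Finset.card hPne
  have hAP' := hAP
  simp only [hP, mem_filter, mem_powerset] at hAP'
  refine ⟨A, hAP'.1, hAP'.2, ?_⟩
  have hcover : H2 p r1 ⊆ A.biUnion (fun τ => univ.filter (fun σ => dist3 σ τ ≤ s)) := by
    intro σ hσ
    rw [mem_biUnion]
    by_contra hnone
    push_neg at hnone
    have hfar : ∀ τ ∈ A, s < dist3 σ τ := by
      intro τ hτ
      have := hnone τ hτ
      simp only [mem_filter, mem_univ, true_and, not_le] at this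
      exact this
    have hσA : σ ∉ A := by
      intro h
      have := hfar σ h
      rw [dist3_self] at this
      omega
    have hins : insert σ A ∈ P := by
      simp only [hP, mem_filter, mem_powerset]
      refine ⟨insert_subset hσ hAP'.1, ?_⟩
      intro a ha b hb hab
      rcases mem_insert.mp ha with rfl | ha'
      · rcases mem_insert.mp hb with rfl | hb'
        · exact absurd rfl hab
        · exact hfar b hb'
      · rcases mem_insert.mp hb with rfl | hb'
        · rw [dist3_comm]; exact hfar a ha'
        · exact hAP'.2 a ha' b hb' hab
    have := hAmax _ hins
    rw [card_insert_of_notMem hσA] at this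
    omega
  calc (H2 p r1).card ≤ (A.biUnion (fun τ => univ.filter (fun σ => dist3 σ τ ≤ s))).card :=
        card_le_card hcover
    _ ≤ ∑ τ ∈ A, (univ.filter (fun σ => dist3 σ τ ≤ s)).card := card_biUnion_le
    _ ≤ ∑ _τ ∈ A, Wvol p s := Finset.sum_le_sum (fun τ _ => ball_card_le τ s)
    _ = A.card * Wvol p s := by rw [sum_const, smul_eq_mul]

lemma choose_ratio (p j : ℕ) (hp : 3*j+2 ≤ p) : 2 * p.choose j ≤ p.choose (j+1) := by
  have h := Nat.choose_succ_right_eq p j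
  have hpos : 0 < j + 1 := Nat.succ_pos j
  apply Nat.le_of_mul_le_mul_right _ hpos
  rw [h]
  have h2 : 2 * (j+1) ≤ p - j := by omega
  calc 2 * p.choose j * (j+1) = p.choose j * (2*(j+1)) := by ring
    _ ≤ p.choose j * (p - j) := Nat.mul_le_mul_left _ h2

lemma geom_sum_le (t : ℕ → ℝ) (s : ℕ) (ht0 : ∀ j, 0 ≤ t j)
    (hrat : ∀ j < s, 4 * t j ≤ t (j+1)) :
    ∑ j ∈ Finset.range (s+1), t j ≤ 4/3 * t s := by
  induction s with
  | zero => simp; linarith [ht0 0]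
  | succ n ih =>
    have ihn : ∑ j ∈ Finset.range (n+1), t j ≤ 4/3 * t n :=
      ih (fun j hj => hrat j (by omega))
    rw [Finset.sum_range_succ]
    have := hrat n (by omega)
    linarith

lemma wvol_le (p r1 : ℕ) (hr : 3*r1 ≤ 2*p) :
    ((Wvol p (r1/2) : ℕ) : ℝ) ≤ 4/3 * (p.choose (r1/2) * 2 ^ (r1/2)) := by
  unfold Wvol
  push_cast
  apply geom_sum_le (fun j => (p.choose j : ℝ) * 2 ^ j)
  · intro j; positivity
  · intro j hj
    have hp : 3*j+2 ≤ p := by omega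
    have h1 := choose_ratio p j hp
    have h1' : (2 * p.choose j : ℝ) ≤ p.choose (j+1) := by exact_mod_cast h1
    calc 4 * ((p.choose j : ℝ) * 2 ^ j) = (2 * p.choose j) * 2 ^ (j+1) := by ring
      _ ≤ (p.choose (j+1) : ℝ) * 2 ^ (j+1) :=
          mul_le_mul_of_nonneg_right h1' (by positivity)

lemma cast_choose_succ (p k : ℕ) (hk : k ≤ p) :
    ((p.choose (k+1) : ℝ)) * (k+1) = (p.choose k : ℝ) * ((p:ℝ) - k) := by
  have h := Nat.choose_succ_right_eq p k
  have h2 : ((p.choose (k+1) * (k+1) : ℕ) : ℝ) = ((p.choose k * (p - k) : ℕ) : ℝ) := by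
    exact_mod_cast congrArg (Nat.cast : ℕ → ℝ) h
  push_cast [Nat.cast_sub hk] at h2
  linarith

/-- the key binomial growth inequality. -/
lemma key_ineq (p r1 : ℕ) (h2 : 1 ≤ r1) (hr : 3*r1 ≤ 2*p) :
    2 * (((p:ℝ) - r1/2)/r1) ^ (r1 - r1/2) * (p.choose (r1/2) * 2 ^ (r1/2))
      ≤ (p.choose r1 : ℝ) * 2 ^ r1 := by
  set s := r1 / 2 with hs
  set b : ℝ := ((p:ℝ) - r1/2)/r1 with hb
  have hr1pos : (0:ℝ) < r1 := by exact_mod_cast h2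
  have hs2 : 2*s ≤ r1 ∧ r1 ≤ 2*s+1 := by omega
  have hPR : 3*(r1:ℝ) ≤ 2*p := by exact_mod_cast hr
  have hb0 : 0 ≤ b := by
    apply div_nonneg _ (le_of_lt hr1pos)
    linarith
  have hsp : s ≤ p := by omega
  have hbase : b * (p.choose s : ℝ) ≤ (p.choose (s+1) : ℝ) := by
    have hid := cast_choose_succ p s hsp
    have hkey : b * ((s:ℝ)+1) ≤ (p:ℝ) - s := by
      rw [hb, div_mul_eq_mul_div, div_le_iff₀ hr1pos]
      rcases Nat.eq_zero_or_pos s with h0 | hpos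
      · have hr11 : r1 = 1 := by omega
        rw [h0, hr11]
        push_cast
        nlinarith [hPR, hr1pos]
      · have hS1 : (1:ℝ) ≤ s := by exact_mod_cast hpos
        have hRS : 2*(s:ℝ) ≤ r1 := by exact_mod_cast hs2.1
        have hRS' : (r1:ℝ) ≤ 2*s+1 := by exact_mod_cast hs2.2
        have hPS : (s:ℝ) ≤ p := by exact_mod_cast hsp
        nlinarith [mul_nonneg (sub_nonneg.2 hPS) (sub_nonneg.2 hS1),
          mul_nonneg (sub_nonneg.2 hRS) (by linarith : (0:ℝ) ≤ (p:ℝ) - s/2 + 1/2)]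
    have hch0 : (0:ℝ) ≤ p.choose s := by positivity
    have hspos : (0:ℝ) < (s:ℝ) + 1 := by positivity
    apply le_of_mul_le_mul_right _ hspos
    calc b * (p.choose s : ℝ) * ((s:ℝ)+1) = (b * ((s:ℝ)+1)) * (p.choose s : ℝ) := by ring
      _ ≤ ((p:ℝ) - s) * (p.choose s : ℝ) := mul_le_mul_of_nonneg_right hkey hch0
      _ = (p.choose (s+1) : ℝ) * ((s:ℝ)+1) := by rw [hid]; ring
  have hstep : ∀ k, k < r1 → b * (p.choose k : ℝ) ≤ 2 * (p.choose (k+1) : ℝ) := by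
    intro k hk
    have hkp : k ≤ p := by omega
    have hid := cast_choose_succ p k hkp
    have hkey : b * ((k:ℝ)+1) ≤ 2 * ((p:ℝ) - k) := by
      have h1 : b * ((k:ℝ)+1) ≤ b * r1 := by
        apply mul_le_mul_of_nonneg_left _ hb0
        have : (k:ℝ)+1 ≤ r1 := by exact_mod_cast hk
        linarith
      have h2' : b * r1 = (p:ℝ) - r1/2 := by
        rw [hb]; field_simp
      have h3 : ((k:ℝ)) ≤ (r1:ℝ) - 1 := by
        have : (k:ℝ)+1 ≤ r1 := by exact_mod_cast hk
        linarith
      calc b * ((k:ℝ)+1) ≤ (p:ℝ) - r1/2 := by rw [← h2']; exact h1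
        _ ≤ 2 * ((p:ℝ) - k) := by linarith
    have hch0 : (0:ℝ) ≤ p.choose k := by positivity
    have hkpos : (0:ℝ) < (k:ℝ) + 1 := by positivity
    apply le_of_mul_le_mul_right _ hkpos
    calc b * (p.choose k : ℝ) * ((k:ℝ)+1) = (b * ((k:ℝ)+1)) * (p.choose k : ℝ) := by ring
      _ ≤ (2 * ((p:ℝ) - k)) * (p.choose k : ℝ) := mul_le_mul_of_nonneg_right hkey hch0
      _ = 2 * ((p.choose (k+1) : ℝ) * ((k:ℝ)+1)) := by rw [hid]; ring
      _ = 2 * (p.choose (k+1) : ℝ) * ((k:ℝ)+1) := by ring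
  have hmain : ∀ k, s+1 ≤ k → k ≤ r1 →
      2 * b ^ (k - s) * ((p.choose s : ℝ) * 2 ^ s) ≤ (p.choose k : ℝ) * 2 ^ k := by
    intro k
    induction k with
    | zero => omega
    | succ n ih =>
      intro hn1 hn2
      rcases Nat.lt_or_ge s n with hsn | hsn
      · have ihn := ih (by omega) (by omega)
        have hsub : n + 1 - s = (n - s) + 1 := by omega
        rw [hsub, pow_succ]
        have hstepn := hstep n (by omega)
        calc 2 * (b ^ (n-s) * b) * ((p.choose s : ℝ) * 2 ^ s)
            = b * (2 * b ^ (n-s) * ((p.choose s : ℝ) * 2 ^ s)) := by ring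
          _ ≤ b * ((p.choose n : ℝ) * 2 ^ n) := mul_le_mul_of_nonneg_left ihn hb0
          _ = (b * (p.choose n : ℝ)) * 2 ^ n := by ring
          _ ≤ (2 * (p.choose (n+1) : ℝ)) * 2 ^ n :=
              mul_le_mul_of_nonneg_right hstepn (by positivity)
          _ = (p.choose (n+1) : ℝ) * 2 ^ (n+1) := by ring
      · have hns : n = s := by omega
        rw [hns]
        have hsub : s + 1 - s = 1 := by omega
        rw [hsub, pow_one]
        calc 2 * b * ((p.choose s : ℝ) * 2 ^ s) = (b * (p.choose s:ℝ)) * 2^(s+1) := by ring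
          _ ≤ (p.choose (s+1) : ℝ) * 2 ^ (s+1) :=
              mul_le_mul_of_nonneg_right hbase (by positivity)
  exact hmain r1 (by omega) le_rfl

lemma natcard_filter (P : Fin p → Prop) [DecidablePred P] :
    Nat.card {i // P i} = (univ.filter P).card := by
  rw [Nat.card_eq_fintype_card, Fintype.card_subtype]

/-- the coding map from `Fin 3` to the values `{-1, 0, 1}`. -/
def gmap (x : Fin 3) : ℝ := ((x.val : ℕ) : ℝ) - 1

lemma gmap_inj : Function.Injective gmap := by
  intro a b h
  have h1 : ((a.val : ℕ) : ℝ) = ((b.val : ℕ) : ℝ) := by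
    simpa [gmap, sub_eq_sub_iff_sub_eq_sub] using h
  have h2 : a.val = b.val := by exact_mod_cast h1
  exact Fin.ext h2

lemma gmap_vals (x : Fin 3) : gmap x = -1 ∨ gmap x = 0 ∨ gmap x = 1 := by
  fin_cases x <;> simp [gmap] <;> norm_num

lemma gmap_one : gmap 1 = 0 := by simp [gmap]

lemma gmap_ne_zero (x : Fin 3) : gmap x ≠ 0 ↔ x ≠ 1 := by
  rw [← gmap_one]
  exact gmap_inj.ne_iff

lemma l0_gmap (σ : Fin p → Fin 3) : l0 (fun i => gmap (σ i)) = (supp σ).card := by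
  classical
  unfold l0 supp
  rw [natcard_filter]
  congr 1
  ext i
  simp [gmap_ne_zero]

lemma hamming_gmap (σ τ : Fin p → Fin 3) :
    hamming (fun i => gmap (σ i)) (fun i => gmap (τ i)) = dist3 σ τ := by
  classical
  unfold hamming dist3
  rw [natcard_filter]
  congr 1
  ext i
  simp [gmap_inj.ne_iff]

end PackingB2

/-- Lemma B.2. If `p ≥ 2`, `r1 ≥ 1` and `r1 ≤ (2/3) p`, then the set of
vectors in `{-1,0,1}^p` with exactly `r1` nonzero coordinates contains a subset of
cardinality at least `exp((r1/2) log((p - r1/2)/r1))` whose elements have pairwise Hamming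
distance greater than `r1/2`. -/
theorem packing_subset_main_effects (p r1 : ℕ) (h1 : 2 ≤ p) (h2 : 1 ≤ r1)
    (h3 : (r1 : ℝ) ≤ 2 / 3 * (p : ℝ)) :
    ∃ B : Finset (Fin p → ℝ),
      (∀ v ∈ B, (∀ i, v i = -1 ∨ v i = 0 ∨ v i = 1) ∧ l0 v = r1) ∧
      Real.exp ((r1 : ℝ) / 2 * Real.log (((p : ℝ) - (r1 : ℝ) / 2) / (r1 : ℝ))) ≤
        (B.card : ℝ) ∧
      ∀ v ∈ B, ∀ w ∈ B, v ≠ w → (r1 : ℝ) / 2 < (hamming v w : ℝ) := by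
  classical
  open PackingB2 Finset in
  -- basic numeric facts
  have hr : 3 * r1 ≤ 2 * p := by
    have : (3 * r1 : ℝ) ≤ 2 * p := by push_cast; linarith
    exact_mod_cast this
  set s := r1 / 2 with hsdef
  have hr1pos : (0:ℝ) < r1 := by exact_mod_cast h2
  set b : ℝ := ((p:ℝ) - r1/2)/r1 with hbdef
  have hPR : 3*(r1:ℝ) ≤ 2*p := by exact_mod_cast hr
  have hb1 : 1 ≤ b := by
    rw [hbdef, le_div_iff₀ hr1pos]
    linarith
  have hbpos : 0 < b := lt_of_lt_of_le one_pos hb1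
  -- the packing
  obtain ⟨A, hAsub, hApair, hAcov⟩ := PackingB2.exists_max_packing (p := p) r1 s
  -- the vector set
  set B : Finset (Fin p → ℝ) := A.image (fun σ => fun i => gmap (σ i)) with hBdef
  have himg_inj : Function.Injective (fun σ : Fin p → Fin 3 => fun i => gmap (σ i)) := by
    intro σ τ h
    funext i
    exact gmap_inj (congrFun h i)
  have hcardB : B.card = A.card := Finset.card_image_of_injective A himg_inj
  refine ⟨B, ?_, ?_, ?_⟩
  · -- membership properties
    intro v hv
    obtain ⟨σ, hσA, rfl⟩ := Finset.mem_image.mp hv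
    have hσH := hAsub hσA
    simp only [PackingB2.H2, Finset.mem_filter, Finset.mem_univ, true_and] at hσH
    exact ⟨fun i => gmap_vals (σ i), by rw [l0_gmap, hσH]⟩
  · -- cardinality bound
    have hN : Real.exp ((r1 : ℝ) / 2 * Real.log (((p : ℝ) - (r1 : ℝ) / 2) / (r1 : ℝ)))
        = b ^ ((r1:ℝ)/2) := by
      rw [Real.rpow_def_of_pos hbpos, mul_comm]
    have hexp_le : b ^ ((r1:ℝ)/2) ≤ b ^ ((r1 - s : ℕ) : ℝ) := by
      apply Real.rpow_le_rpow_of_exponent_le hb1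
      have hsr : s ≤ r1 := by omega
      have h2s : 2*s ≤ r1 := by omega
      rw [Nat.cast_sub hsr]
      have : (2*s : ℝ) ≤ r1 := by exact_mod_cast h2s
      linarith
    rw [Real.rpow_natCast] at hexp_le
    have hbpow0 : (0:ℝ) ≤ b ^ (r1 - s) := by positivity
    have hW1 : 1 ≤ Wvol p s := by
      unfold Wvol
      calc 1 = p.choose 0 * 2 ^ 0 := by simp
        _ ≤ ∑ j ∈ Finset.range (s+1), p.choose j * 2 ^ j :=
            Finset.single_le_sum (f := fun j => p.choose j * 2 ^ j)
              (fun j _ => Nat.zero_le _) (Finset.mem_range.mpr (Nat.succ_pos s))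
    have hWpos : (0:ℝ) < (Wvol p s : ℝ) := by exact_mod_cast hW1
    have hwle := PackingB2.wvol_le p r1 hr
    have hkey := PackingB2.key_ineq p r1 h2 hr
    rw [← hsdef, ← hbdef] at hkey
    have hcnt : ((H2 p r1).card : ℝ) = (p.choose r1 : ℝ) * 2 ^ r1 := by
      rw [PackingB2.card_H2]; push_cast; ring
    have hcov : ((H2 p r1).card : ℝ) ≤ (A.card : ℝ) * (Wvol p s : ℝ) := by
      exact_mod_cast hAcov
    have chain : b ^ ((r1:ℝ)/2) * (Wvol p s : ℝ) ≤ (A.card : ℝ) * (Wvol p s : ℝ) := by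
      calc b ^ ((r1:ℝ)/2) * (Wvol p s : ℝ)
          ≤ b ^ (r1 - s) * (Wvol p s : ℝ) :=
            mul_le_mul_of_nonneg_right hexp_le (le_of_lt hWpos)
        _ ≤ b ^ (r1 - s) * (4/3 * ((p.choose s : ℝ) * 2 ^ s)) :=
            mul_le_mul_of_nonneg_left hwle hbpow0
        _ = (2/3) * (2 * b ^ (r1 - s) * ((p.choose s : ℝ) * 2 ^ s)) := by ring
        _ ≤ (2/3) * ((p.choose r1 : ℝ) * 2 ^ r1) := by
            apply mul_le_mul_of_nonneg_left hkey (by norm_num)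
        _ ≤ (p.choose r1 : ℝ) * 2 ^ r1 := by
            have : (0:ℝ) ≤ (p.choose r1 : ℝ) * 2 ^ r1 := by positivity
            linarith
        _ = ((H2 p r1).card : ℝ) := hcnt.symm
        _ ≤ (A.card : ℝ) * (Wvol p s : ℝ) := hcov
    have hfin : b ^ ((r1:ℝ)/2) ≤ (A.card : ℝ) :=
      le_of_mul_le_mul_right chain hWpos
    rw [hN, hcardB]
    exact hfin
  · -- pairwise distances
    intro v hv w hw hvw
    obtain ⟨σ, hσA, rfl⟩ := Finset.mem_image.mp hv
    obtain ⟨τ, hτA, rfl⟩ := Finset.mem_image.mp hw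
    have hστ : σ ≠ τ := by
      intro h; exact hvw (by rw [h])
    have hd := hApair σ hσA τ hτA hστ
    rw [hamming_gmap]
    have hds : (s:ℝ) + 1 ≤ (dist3 σ τ : ℝ) := by exact_mod_cast hd
    have h2s1 : r1 ≤ 2*s+1 := by omega
    have : (r1:ℝ) ≤ 2*(s:ℝ)+1 := by exact_mod_cast h2s1
    linarith

end
end

section
/- (Local packing for interaction effects, Case 1 of the lower-bound proof) Let $n, p, r_1, r_2$ be positive integers with $2 \le r_1 \le p$ and $1 \le r_2 \le \frac{2}{3}\binom{r_1}{2}$, and suppose the design matrix $Z \in \mathbb{R}^{n \times (p + \binom{p}{2})}$ satisfies the Sparse Riesz Condition with $l_1 = r_1$, $l_2 = r_2$ and constants $0 < b_1 \le b_2$. Then for every $\epsilon > 0$ there exists a set $G$ of coefficient vectors $\beta \in B_0(r_1, r_2; \ddot{\mathbb{R}}^p_{strong})$ with $\|\beta\|_2 \le \epsilon$, such that $|G| \ge \exp\big(\frac{r_2}{2}\log\frac{\binom{r_1}{2} - r_2/2}{r_2}\big)$, every $\beta \in G$ satisfies $\frac{1}{\sqrt{n}}\|Z\beta\|_2 \le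 b_2\epsilon$, and any two distinct $\beta, \beta' \in G$ satisfy $\frac{1}{\sqrt{n}}\|Z\beta - Z\beta'\|_2 \ge \frac{b_1\epsilon}{2}$. -/
open MeasureTheory ProbabilityTheory Real

noncomputable section

/-- Index type for two-way interactions: ordered pairs (i,j) with i < j. -/
abbrev Idx2 (p : ℕ) := {q : Fin p × Fin p // q.1 < q.2}

/-- Full index: `p` main effects plus the `p.choose 2` interactions. -/
abbrev FullIdx (p : ℕ) := Fin p ⊕ Idx2 p

/-- Squared Euclidean norm of a vector. -/
def sqnorm {ι : Type*} [Fintype ι] (v : ι → ℝ) : ℝ := ∑ i, (v i) ^ 2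

/-- Sparse Riesz Condition with sparsity levels `l1, l2` and constants `b1 ≤ b2`:
for every coefficient vector with at most `min (2 l1) p` nonzero main effects and at most
`min (2 l2) (p choose 2)` nonzero interaction effects,
`b1 ‖β‖₂ ≤ n^{-1/2} ‖Zβ‖₂ ≤ b2 ‖β‖₂`. -/
def SRC (n p : ℕ) (Z : Matrix (Fin n) (FullIdx p) ℝ) (l1 l2 : ℕ) (b1 b2 : ℝ) : Prop :=
  ∀ β : FullIdx p → ℝ,
    l0 (fun i => β (Sum.inl i)) ≤ min (2 * l1) p →
    l0 (fun q : Idx2 p => β (Sum.inr q)) ≤ min (2 * l2) (p.choose 2) →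
    b1 * Real.sqrt (sqnorm β) ≤ Real.sqrt (sqnorm (Z.mulVec β)) / Real.sqrt n ∧
      Real.sqrt (sqnorm (Z.mulVec β)) / Real.sqrt n ≤ b2 * Real.sqrt (sqnorm β)

/-- Strong heredity: a nonzero interaction requires both its main effects to be nonzero. -/
def strongHeredity {p : ℕ} (β : FullIdx p → ℝ) : Prop :=
  ∀ q : Idx2 p, β (Sum.inr q) ≠ 0 → β (Sum.inl q.1.1) ≠ 0 ∧ β (Sum.inl q.1.2) ≠ 0

/-- Weak heredity: a nonzero interaction requires at least one main effect to be nonzero. -/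
def weakHeredity {p : ℕ} (β : FullIdx p → ℝ) : Prop :=
  ∀ q : Idx2 p, β (Sum.inr q) ≠ 0 → β (Sum.inl q.1.1) ≠ 0 ∨ β (Sum.inl q.1.2) ≠ 0

/-- The ℓ0 ball: at most `r1` nonzero main effects and `r2` nonzero interactions,
under the heredity constraint `S`. -/
def B0 (p r1 r2 : ℕ) (S : (FullIdx p → ℝ) → Prop) : Set (FullIdx p → ℝ) :=
  {β | S β ∧ l0 (fun i => β (Sum.inl i)) ≤ r1 ∧ l0 (fun q : Idx2 p => β (Sum.inr q)) ≤ r2}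

/-- The noise distribution: `n` iid `N(0, σ²)` coordinates. -/
def noise (n : ℕ) (σ : ℝ) : Measure (Fin n → ℝ) :=
  Measure.pi fun _ => gaussianReal 0 (Real.toNNReal (σ ^ 2))

/-- Risk `E[(1/n)‖δ(Y) - Zβ‖₂²]` of an estimator `δ` of the mean vector `Zβ`,
where `Y = Zβ + ε` and `ε ∼ N(0, σ² Iₙ)`. -/
def risk (n p : ℕ) (σ : ℝ) (Z : Matrix (Fin n) (FullIdx p) ℝ)
    (δ : (Fin n → ℝ) → (Fin n → ℝ)) (β : FullIdx p → ℝ) : ℝ :=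
  ∫ ε, (1 / (n : ℝ)) * sqnorm (fun i => δ (Z.mulVec β + ε) i - Z.mulVec β i) ∂(noise n σ)

namespace LPI
open Finset



-- choose ratio lower bound
lemma chooseRatio (d s : ℕ) (hsd : s ≤ d) :
    ∀ m j, j + m ≤ s → (d.choose j : ℝ) * (((d:ℝ) - s + 1)/s) ^ m ≤ d.choose (j + m) := by
  intro m
  induction m with
  | zero => intro j _; simp
  | succ m ih =>
    intro j hjm
    have hs0 : 0 < s := by omega
    have hx0 : (0:ℝ) ≤ ((d:ℝ) - s + 1)/s := by
      apply div_nonneg _ (by positivity)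
      have : (s:ℝ) ≤ d := by exact_mod_cast hsd
      linarith
    have h1 : (d.choose j : ℝ) * (((d:ℝ) - s + 1)/s) ^ (m+1)
        ≤ (d.choose (j+m) : ℝ) * (((d:ℝ) - s + 1)/s) := by
      rw [pow_succ, ← mul_assoc]
      exact mul_le_mul_of_nonneg_right (ih j (by omega)) hx0
    refine h1.trans ?_
    -- (j+m+1) * C(d, j+m+1) = C(d,j+m) * (d - (j+m))
    have key := Nat.choose_succ_right_eq d (j+m)
    set k := j + m with hk
    have hks : k + 1 ≤ s := by omega
    have hkd : k ≤ d := by omega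
    have keyR : (d.choose (k+1) : ℝ) * (k+1) = (d.choose k : ℝ) * ((d:ℝ) - k) := by
      have := congrArg (fun t : ℕ => (t:ℝ)) key
      push_cast at this
      rw [Nat.cast_sub hkd] at this
      push_cast at this
      linarith [this]
    have hineq : (((d:ℝ) - s + 1)/s) * ((k:ℝ)+1) ≤ (d:ℝ) - k := by
      rw [div_mul_eq_mul_div, div_le_iff₀ (by positivity)]
      have hsd' : (s:ℝ) ≤ d := by exact_mod_cast hsd
      have hks' : (k:ℝ) + 1 ≤ s := by exact_mod_cast hks
      nlinarith
    have hck : (0:ℝ) ≤ d.choose k := by positivity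
    have : (d.choose k : ℝ) * (((d:ℝ) - s + 1)/s)
        ≤ (d.choose (k+1) : ℝ) := by
      rw [← mul_le_mul_iff_of_pos_right (show (0:ℝ) < (k:ℝ)+1 by positivity)]
      calc (d.choose k : ℝ) * (((d:ℝ) - s + 1)/s) * ((k:ℝ)+1)
          = (d.choose k : ℝ) * ((((d:ℝ) - s + 1)/s) * ((k:ℝ)+1)) := by ring
        _ ≤ (d.choose k : ℝ) * ((d:ℝ) - k) := by
            exact mul_le_mul_of_nonneg_left hineq hck
        _ = (d.choose (k+1) : ℝ) * ((k:ℝ)+1) := keyR.symm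
    simpa [hk, Nat.add_assoc] using this



lemma geomStep (d s u : ℕ) (hs : 1 ≤ s) (hu : 2*u ≤ s - 1) (hd : 3*s ≤ 2*d) :
    ∀ j, j + 1 ≤ u → 3 * (d.choose j * 2^j) ≤ d.choose (j+1) * 2^(j+1) := by
  intro j hj
  have key := Nat.choose_succ_right_eq d j   -- C(d,j+1)*(j+1) = C(d,j)*(d-j)
  have h1 : 3*(j+1) ≤ 2*(d-j) := by omega
  have h2 : (j+1) * (3 * d.choose j) ≤ (j+1) * (2 * d.choose (j+1)) := by
    calc (j+1) * (3 * d.choose j) = (3*(j+1)) * d.choose j := by ring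
      _ ≤ (2*(d-j)) * d.choose j := Nat.mul_le_mul_right _ h1
      _ = 2 * (d.choose j * (d-j)) := by ring
      _ = 2 * (d.choose (j+1) * (j+1)) := by rw [key]
      _ = (j+1) * (2 * d.choose (j+1)) := by ring
  have h3 : 3 * d.choose j ≤ 2 * d.choose (j+1) := Nat.le_of_mul_le_mul_left h2 (by omega)
  calc 3 * (d.choose j * 2^j) = (3 * d.choose j) * 2^j := by ring
    _ ≤ (2 * d.choose (j+1)) * 2^j := Nat.mul_le_mul_right _ h3
    _ = d.choose (j+1) * 2^(j+1) := by ring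

-- geometric sum bound: sum of terms ≤ (3/2) * top term  (real)
lemma geomSumBound (d s u : ℕ) (hs : 1 ≤ s) (hu : 2*u ≤ s - 1) (hd : 3*s ≤ 2*d) :
    ∑ j ∈ range (u+1), ((d.choose j : ℝ) * 2^j) ≤ (3/2) * (d.choose u * 2^u) := by
  have main : ∀ n, n ≤ u → ∑ j ∈ range (n+1), ((d.choose j : ℝ) * 2^j)
      ≤ (3/2) * (d.choose n * 2^n) := by
    intro n
    induction n with
    | zero => intro _; simp; norm_num
    | succ n ih =>
      intro hn
      rw [Finset.sum_range_succ]
      have hstep : 3 * ((d.choose n : ℝ) * 2^n) ≤ (d.choose (n+1) : ℝ) * 2^(n+1) := by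
        have := geomStep d s u hs hu hd n hn
        exact_mod_cast this
      have := ih (by omega)
      push_cast
      push_cast at this hstep
      linarith
  exact main u le_rfl



lemma L2 (d s u : ℕ) (hs : 1 ≤ s) (hd : 3*s ≤ 2*d) (hu : u = (s-1)/2) :
    (((d:ℝ) - s/2)/s) ^ ((s:ℝ)/2) ≤ (2/3) * (2*((d:ℝ)-s+1)/s) ^ ((s - u : ℕ) : ℝ) := by
  have hs0 : (0:ℝ) < s := by exact_mod_cast (by omega : 0 < s)
  have hdR : 3*(s:ℝ) ≤ 2*d := by exact_mod_cast hd
  set c : ℝ := ((d:ℝ) - s/2)/s with hc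
  set b : ℝ := 2*((d:ℝ)-s+1)/s with hb
  have hc1 : 1 ≤ c := by rw [hc, le_div_iff₀ hs0]; linarith
  have hb1 : 1 ≤ b := by rw [hb, le_div_iff₀ hs0]; linarith
  have hc0 : 0 < c := by linarith
  have hb0 : 0 < b := by linarith
  have hden : (0:ℝ) < (d:ℝ) - s/2 := by linarith
  have hbc : c ≤ b := by
    rw [hc, hb]; exact (div_le_div_iff_of_pos_right hs0).2 (by linarith)
  have hbceq : b/c = (2*((d:ℝ)-s+1))/((d:ℝ)-s/2) := by
    rw [hb, hc, div_div_div_comm, div_self (ne_of_gt hs0), div_one]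
  have hbcge1 : (1:ℝ) ≤ b/c := (one_le_div hc0).2 hbc
  have hm : (s:ℝ) + 1 ≤ 2 * ((s - u : ℕ) : ℝ) := by
    have : s + 1 ≤ 2 * (s - u) := by omega
    exact_mod_cast this
  have h1 : b ^ (((s:ℝ)+1)/2) ≤ b ^ ((s - u : ℕ) : ℝ) :=
    rpow_le_rpow_of_exponent_le hb1 (by linarith)
  have hsplit : b ^ (((s:ℝ)+1)/2) = b ^ ((1:ℝ)/2) * ((b/c) ^ ((s:ℝ)/2) * c ^ ((s:ℝ)/2)) := by
    rw [← mul_rpow (by positivity : (0:ℝ) ≤ b/c) (le_of_lt hc0),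
        div_mul_cancel₀ _ (ne_of_gt hc0), ← rpow_add hb0]
    ring_nf
  have sqrt_ge : ∀ x y : ℝ, 0 ≤ y → y^2 ≤ x → y ≤ x ^ ((1:ℝ)/2) := by
    intro x y hy hxy
    calc y = (y^(2:ℕ)) ^ ((1:ℝ)/2) := by
          rw [← rpow_natCast (y) 2, ← rpow_mul hy]; norm_num
      _ ≤ x ^ ((1:ℝ)/2) := rpow_le_rpow (by positivity) hxy (by norm_num)
  have key : (3/2 : ℝ) ≤ b ^ ((1:ℝ)/2) * (b/c) ^ ((s:ℝ)/2) := by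
    rcases eq_or_lt_of_le hs with h1s | h2s
    · -- s = 1
      have hsR : (s:ℝ) = 1 := by exact_mod_cast h1s.symm
      rw [hsR]
      have hdge2 : (2:ℝ) ≤ d := by exact_mod_cast (by omega : 2 ≤ d)
      have hb9 : (9/4 : ℝ) ≤ b := by
        rw [hb, le_div_iff₀ hs0]; linarith [hsR]
      have e1 : (3/2:ℝ) ≤ b ^ ((1:ℝ)/2) :=
        sqrt_ge b (3/2) (by norm_num) (by norm_num; linarith)
      have e2 : (1:ℝ) ≤ (b/c) ^ ((1:ℝ)/2) := one_le_rpow hbcge1 (by norm_num)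
      calc (3/2:ℝ) = (3/2) * 1 := by ring
        _ ≤ b ^ ((1:ℝ)/2) * (b/c) ^ ((1:ℝ)/2) :=
            mul_le_mul e1 e2 (by norm_num) (by positivity)
    · have hs2R : (2:ℝ) ≤ s := by exact_mod_cast h2s
      rcases le_or_gt ((2:ℝ)*s) (d:ℝ) with hbig | hsmall
      · have hb2 : (441/256:ℝ) ≤ b := by
          rw [hb, le_div_iff₀ hs0]; linarith
        have hbc87 : (8/7:ℝ) ≤ b/c := by
          rw [hbceq, le_div_iff₀ hden]; linarith
        have e1 : (21/16:ℝ) ≤ b ^ ((1:ℝ)/2) :=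
          sqrt_ge b (21/16) (by norm_num) (by norm_num; linarith)
        have e2 : (8/7:ℝ) ≤ (b/c) ^ ((s:ℝ)/2) := by
          calc (8/7:ℝ) ≤ b/c := hbc87
            _ = (b/c) ^ (1:ℝ) := by rw [rpow_one]
            _ ≤ (b/c) ^ ((s:ℝ)/2) := rpow_le_rpow_of_exponent_le hbcge1 (by linarith)
        calc (3/2:ℝ) ≤ (21/16) * (8/7) := by norm_num
          _ ≤ b ^ ((1:ℝ)/2) * (b/c) ^ ((s:ℝ)/2) :=
              mul_le_mul e1 e2 (by norm_num) (by positivity)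
      · have hp : (0:ℝ) ≤ s * ((d:ℝ) - 3/2*s) := by
          apply mul_nonneg (le_of_lt hs0); linarith
        have ht : (4/(3*(s:ℝ))) ≤ b/c - 1 := by
          rw [hbceq, le_sub_iff_add_le, div_add' _ _ _ (by positivity),
              div_le_div_iff₀ (by positivity) hden]
          nlinarith [hp, hsmall, hs2R]
        have hber : 1 + ((s:ℝ)/2) * (b/c - 1) ≤ (b/c) ^ ((s:ℝ)/2) := by
          have := one_add_mul_self_le_rpow_one_add
            (show (-1:ℝ) ≤ b/c - 1 by linarith) (show (1:ℝ) ≤ (s:ℝ)/2 by linarith)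
          simpa using this
        have h53 : (5/3:ℝ) ≤ (b/c) ^ ((s:ℝ)/2) := by
          have h4 : (2/3:ℝ) ≤ ((s:ℝ)/2) * (b/c - 1) := by
            calc (2/3:ℝ) = ((s:ℝ)/2) * (4/(3*(s:ℝ))) := by field_simp; ring
              _ ≤ ((s:ℝ)/2) * (b/c - 1) := mul_le_mul_of_nonneg_left ht (by positivity)
          linarith
        have e1 : (1:ℝ) ≤ b ^ ((1:ℝ)/2) := one_le_rpow hb1 (by norm_num)
        calc (3/2:ℝ) ≤ 1 * (5/3) := by norm_num
          _ ≤ b ^ ((1:ℝ)/2) * (b/c) ^ ((s:ℝ)/2) :=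
              mul_le_mul e1 h53 (by norm_num) (by positivity)
  have hcpos : (0:ℝ) < c ^ ((s:ℝ)/2) := rpow_pos_of_pos hc0 _
  calc c ^ ((s:ℝ)/2) = (2/3) * ((3/2) * c ^ ((s:ℝ)/2)) := by ring
    _ ≤ (2/3) * (b ^ ((1:ℝ)/2) * (b/c) ^ ((s:ℝ)/2) * c ^ ((s:ℝ)/2)) := by
        apply mul_le_mul_of_nonneg_left _ (by norm_num)
        exact mul_le_mul_of_nonneg_right key (le_of_lt hcpos)
    _ = (2/3) * b ^ (((s:ℝ)+1)/2) := by rw [hsplit]; ring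
    _ ≤ (2/3) * b ^ ((s - u : ℕ) : ℝ) := mul_le_mul_of_nonneg_left h1 (by norm_num)


variable {ι : Type*} [Fintype ι] [DecidableEq ι]

-- lower bound on the number of s-sparse ternary vectors
lemma Acard (s : ℕ) (hs : s ≤ Fintype.card ι) :
    ((Fintype.card ι).choose s) * 2^s ≤
      (univ.filter fun v : ι → Fin 3 => (univ.filter fun i => v i ≠ 0).card = s).card := by
  classical
  set A := univ.filter fun v : ι → Fin 3 => (univ.filter fun i => v i ≠ 0).card = s with hA
  set F : Finset ι → Finset (ι → Fin 3) :=
    fun S => Fintype.piFinset fun i => if i ∈ S then ({1,2} : Finset (Fin 3)) else {0} with hF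
  have hsupp : ∀ S : Finset ι, ∀ v ∈ F S, (univ.filter fun i => v i ≠ 0) = S := by
    intro S v hv
    rw [Fintype.mem_piFinset] at hv
    ext i
    simp only [mem_filter, mem_univ, true_and]
    constructor
    · intro h
      by_contra hi
      have := hv i
      rw [if_neg hi] at this
      simp at this
      exact h this
    · intro hi
      have := hv i
      rw [if_pos hi, mem_insert, mem_singleton] at this
      rcases this with h | h <;> rw [h] <;> decide
  have hsub : ((univ.powersetCard s).biUnion F) ⊆ A := by
    intro v hv
    rw [mem_biUnion] at hv
    obtain ⟨S, hS, hvS⟩ := hv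
    rw [hA, mem_filter]
    refine ⟨mem_univ _, ?_⟩
    rw [hsupp S v hvS]
    exact (mem_powersetCard.1 hS).2
  have hdisj : ∀ S ∈ univ.powersetCard s, ∀ T ∈ univ.powersetCard s, S ≠ T →
      Disjoint (F S) (F T) := by
    intro S _ T _ hST
    rw [disjoint_left]
    intro v hvS hvT
    exact hST ((hsupp S v hvS).symm.trans (hsupp T v hvT))
  have hcard : ∀ S ∈ univ.powersetCard s, (F S).card = 2^s := by
    intro S hS
    rw [hF]
    rw [Fintype.card_piFinset]
    have : ∀ i, (if i ∈ S then ({1,2} : Finset (Fin 3)) else {0}).card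
        = if i ∈ S then 2 else 1 := by
      intro i; split <;> simp
    rw [Finset.prod_congr rfl (fun i _ => this i)]
    rw [Finset.prod_ite_mem univ S (fun _ => (2:ℕ)), univ_inter, Finset.prod_const]
    rw [(mem_powersetCard.1 hS).2]
  calc (Fintype.card ι).choose s * 2^s
      = ∑ S ∈ univ.powersetCard s, 2^s := by
        have hpc : (univ.powersetCard s : Finset (Finset ι)).card
            = (Fintype.card ι).choose s := by
          rw [card_powersetCard, card_univ]
        rw [Finset.sum_const, hpc, smul_eq_mul]
    _ = ((univ.powersetCard s).biUnion F).card := by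
        rw [Finset.card_biUnion hdisj]
        exact (Finset.sum_congr rfl hcard).symm
    _ ≤ A.card := Finset.card_le_card hsub

-- upper bound on Hamming balls
lemma BallCard (u : ℕ) (g : ι → Fin 3) :
    (univ.filter fun v : ι → Fin 3 => (univ.filter fun i => v i ≠ g i).card ≤ u).card ≤
      ∑ j ∈ range (u+1), (Fintype.card ι).choose j * 2^j := by
  classical
  set F : Finset ι → Finset (ι → Fin 3) :=
    fun D => Fintype.piFinset fun i => if i ∈ D then (univ.erase (g i)) else {g i} with hF
  have hsub : (univ.filter fun v : ι → Fin 3 => (univ.filter fun i => v i ≠ g i).card ≤ u)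
      ⊆ ((range (u+1)).biUnion fun j => (univ.powersetCard j).biUnion F) := by
    intro v hv
    rw [mem_filter] at hv
    rw [mem_biUnion]
    refine ⟨(univ.filter fun i => v i ≠ g i).card, mem_range.2 (by omega), ?_⟩
    rw [mem_biUnion]
    refine ⟨univ.filter fun i => v i ≠ g i, mem_powersetCard.2 ⟨subset_univ _, rfl⟩, ?_⟩
    rw [hF, Fintype.mem_piFinset]
    intro i
    by_cases hi : v i ≠ g i
    · rw [if_pos (by simp [hi]), mem_erase]
      exact ⟨hi, mem_univ _⟩
    · rw [if_neg (by simp [hi]), mem_singleton]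
      simpa using hi
  have hFcard : ∀ D : Finset ι, (F D).card = 2^(D.card) := by
    intro D
    rw [hF, Fintype.card_piFinset]
    have : ∀ i, (if i ∈ D then (univ.erase (g i)) else ({g i} : Finset (Fin 3))).card
        = if i ∈ D then 2 else 1 := by
      intro i
      split
      · rw [Finset.card_erase_of_mem (mem_univ _)]; simp
      · simp
    rw [Finset.prod_congr rfl (fun i _ => this i),
        Finset.prod_ite_mem univ D (fun _ => (2:ℕ)), univ_inter, Finset.prod_const]
  calc _ ≤ ((range (u+1)).biUnion fun j => (univ.powersetCard j).biUnion F).card :=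
        Finset.card_le_card hsub
    _ ≤ ∑ j ∈ range (u+1), ((univ.powersetCard j).biUnion F).card := Finset.card_biUnion_le
    _ ≤ ∑ j ∈ range (u+1), (Fintype.card ι).choose j * 2^j := by
        apply Finset.sum_le_sum
        intro j _
        calc ((univ.powersetCard j).biUnion F).card
            ≤ ∑ D ∈ univ.powersetCard j, (F D).card := Finset.card_biUnion_le
          _ = ∑ D ∈ univ.powersetCard j, 2^j := by
              apply Finset.sum_congr rfl
              intro D hD
              rw [hFcard D, (mem_powersetCard.1 hD).2]
          _ = (Fintype.card ι).choose j * 2^j := by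
              have hpc : (univ.powersetCard j : Finset (Finset ι)).card
                  = (Fintype.card ι).choose j := by
                rw [card_powersetCard, card_univ]
              rw [Finset.sum_const, hpc, smul_eq_mul]

set_option maxHeartbeats 1000000 in
lemma packLemma (s : ℕ) (hs : 1 ≤ s) (hsd : 3 * s ≤ 2 * Fintype.card ι) :
    ∃ G : Finset (ι → Fin 3),
      (∀ v ∈ G, (univ.filter fun i => v i ≠ 0).card = s) ∧
      (∀ v ∈ G, ∀ w ∈ G, v ≠ w → s ≤ 2 * (univ.filter fun i => v i ≠ w i).card) ∧
      (((Fintype.card ι : ℝ) - s/2)/s) ^ ((s:ℝ)/2) ≤ (G.card : ℝ) := by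
  classical
  set d := Fintype.card ι with hd
  set u := (s-1)/2 with hu
  set A := univ.filter fun v : ι → Fin 3 => (univ.filter fun i => v i ≠ 0).card = s with hA
  set Ball : (ι → Fin 3) → Finset (ι → Fin 3) :=
    fun g => univ.filter (fun v => (univ.filter fun i => v i ≠ g i).card ≤ u) with hBall
  set P := A.powerset.filter
    (fun B => ∀ v ∈ B, ∀ w ∈ B, v ≠ w → s ≤ 2 * (univ.filter fun i => v i ≠ w i).card) with hP
  have hPne : P.Nonempty := ⟨∅, by simp [hP]⟩
  obtain ⟨G, hGP, hGmax⟩ := Finset.exists_max_image P Finset.card hPne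
  rw [hP, mem_filter, mem_powerset] at hGP
  obtain ⟨hGA, hGpack⟩ := hGP
  refine ⟨G, ?_, hGpack, ?_⟩
  · intro v hv
    have := hGA hv
    rw [hA, mem_filter] at this
    exact this.2
  -- maximality ⇒ covering
  have hcover : ∀ v ∈ A, ∃ g ∈ G, v ∈ Ball g := by
    intro v hv
    by_contra hno
    push_neg at hno
    have hno' : ∀ g ∈ G, u < (univ.filter fun i => v i ≠ g i).card := by
      intro g hg
      have := hno g hg
      rw [hBall] at this
      simp only [mem_filter, mem_univ, true_and, not_le] at this
      exact this
    have hvG : v ∉ G := by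
      intro hvG
      have := hno' v hvG
      simp at this
    have hins : insert v G ∈ P := by
      rw [hP, mem_filter, mem_powerset]
      constructor
      · intro w hw
        rcases mem_insert.1 hw with h | h
        · rwa [h]
        · exact hGA h
      · intro a ha b hb hab
        rcases mem_insert.1 ha with ha' | ha' <;> rcases mem_insert.1 hb with hb' | hb'
        · exact absurd (ha'.trans hb'.symm) hab
        · subst ha'
          have := hno' b hb'
          omega
        · subst hb'
          have h1 := hno' a ha'
          have : (univ.filter fun i => a i ≠ b i).card
              = (univ.filter fun i => b i ≠ a i).card := by
            congr 1
            apply Finset.filter_congr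
            intro i _
            simp [ne_comm]
          omega
        · exact hGpack a ha' b hb' hab
    have := hGmax _ hins
    rw [Finset.card_insert_of_notMem hvG] at this
    omega
  have hAsub : A ⊆ G.biUnion Ball := by
    intro v hv
    rw [mem_biUnion]
    exact hcover v hv
  have hs_le_d : s ≤ d := by omega
  have hu2 : 2*u ≤ s - 1 := by omega
  have hV : ∀ g : ι → Fin 3, ((Ball g).card : ℝ) ≤ (3/2) * ((d.choose u : ℝ) * 2^u) := by
    intro g
    have h1 := BallCard (ι := ι) u g
    have h2 : ((Ball g).card : ℝ) ≤ ∑ j ∈ range (u+1), ((d.choose j : ℝ) * 2^j) := by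
      calc ((Ball g).card : ℝ)
          ≤ ((∑ j ∈ range (u+1), d.choose j * 2^j : ℕ) : ℝ) := by exact_mod_cast h1
        _ = ∑ j ∈ range (u+1), ((d.choose j : ℝ) * 2^j) := by push_cast; rfl
    exact h2.trans (geomSumBound d s u hs hu2 hsd)
  have hAcard : ((d.choose s : ℝ) * 2^s) ≤ (A.card : ℝ) := by
    have := Acard (ι := ι) s hs_le_d
    calc ((d.choose s : ℝ) * 2^s) = ((d.choose s * 2^s : ℕ) : ℝ) := by push_cast; rfl
      _ ≤ (A.card : ℝ) := by exact_mod_cast this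
  have hchain : (A.card : ℝ) ≤ (G.card : ℝ) * ((3/2) * ((d.choose u : ℝ) * 2^u)) := by
    have c1 : A.card ≤ ∑ g ∈ G, (Ball g).card :=
      le_trans (Finset.card_le_card hAsub) Finset.card_biUnion_le
    have c2 : ((∑ g ∈ G, (Ball g).card : ℕ) : ℝ)
        ≤ (G.card : ℝ) * ((3/2) * ((d.choose u : ℝ) * 2^u)) := by
      push_cast
      calc ∑ g ∈ G, ((Ball g).card : ℝ)
          ≤ G.card • ((3/2) * ((d.choose u : ℝ) * 2^u)) :=
            Finset.sum_le_card_nsmul G _ _ (fun g _ => hV g)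
        _ = (G.card : ℝ) * ((3/2) * ((d.choose u : ℝ) * 2^u)) := nsmul_eq_mul _ _
    exact le_trans (by exact_mod_cast c1) c2
  have hx : (d.choose u : ℝ) * (((d:ℝ) - s + 1)/s) ^ (s - u) ≤ (d.choose s : ℝ) := by
    have := chooseRatio d s hs_le_d (s - u) u (by omega)
    rwa [show u + (s - u) = s by omega] at this
  have hupos : (0:ℝ) < (d.choose u : ℝ) * 2^u := by
    have : 0 < d.choose u := Nat.choose_pos (by omega)
    positivity
  have hGlow : (2/3 : ℝ) * (2*((d:ℝ)-s+1)/s) ^ ((s - u : ℕ)) ≤ (G.card : ℝ) := by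
    have hs0 : (0:ℝ) < s := by exact_mod_cast hs
    have h2x : ((2:ℝ)*((d:ℝ)-s+1)/s) ^ ((s - u : ℕ))
        = 2^((s-u:ℕ)) * (((d:ℝ) - s + 1)/s) ^ (s - u) := by
      rw [← mul_pow]
      congr 1
      field_simp
    have hkey : ((d.choose u : ℝ) * 2^u) * ((2*((d:ℝ)-s+1)/s) ^ ((s - u : ℕ)))
        ≤ (d.choose s : ℝ) * 2^s := by
      rw [h2x]
      calc ((d.choose u : ℝ) * 2^u) * (2^((s-u:ℕ)) * (((d:ℝ) - s + 1)/s) ^ (s - u))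
          = ((d.choose u : ℝ) * (((d:ℝ) - s + 1)/s) ^ (s - u)) * (2^u * 2^((s-u:ℕ))) := by
            ring
        _ = ((d.choose u : ℝ) * (((d:ℝ) - s + 1)/s) ^ (s - u)) * 2^s := by
            rw [← pow_add, show u + (s - u) = s by omega]
        _ ≤ (d.choose s : ℝ) * 2^s := by
            apply mul_le_mul_of_nonneg_right hx (by positivity)
    nlinarith [hAcard, hchain, hkey, hupos]
  calc (((d:ℝ) - s/2)/s) ^ ((s:ℝ)/2)
      ≤ (2/3) * (2*((d:ℝ)-s+1)/s) ^ ((s - u : ℕ) : ℝ) := L2 d s u hs hsd hu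
    _ = (2/3) * (2*((d:ℝ)-s+1)/s) ^ ((s - u : ℕ)) := by
        rw [Real.rpow_natCast]
    _ ≤ (G.card : ℝ) := hGlow

lemma card_pairs (m : ℕ) : Fintype.card (Idx2 m) = m.choose 2 := by
  have e : {q : Fin m × Fin m // q.1 < q.2} ≃ Σ j : Fin m, Fin j.1 :=
    { toFun := fun q => ⟨q.1.2, ⟨q.1.1.1, q.2⟩⟩
      invFun := fun x => ⟨(⟨x.2.1, lt_trans x.2.2 x.1.2⟩, x.1), x.2.2⟩
      left_inv := by rintro ⟨⟨i, j⟩, h⟩; rfl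
      right_inv := by rintro ⟨j, i⟩; rfl }
  rw [Fintype.card_congr e, Fintype.card_sigma]
  simp only [Fintype.card_fin]
  rw [Fin.sum_univ_eq_sum_range (fun j => j) m, Finset.sum_range_id]
  rw [Nat.choose_two_right]



def emb {r1 p : ℕ} (h : r1 ≤ p) (x : Idx2 r1) : Idx2 p :=
  ⟨(⟨x.1.1.1, lt_of_lt_of_le x.1.1.2 h⟩, ⟨x.1.2.1, lt_of_lt_of_le x.1.2.2 h⟩), x.2⟩

lemma emb_injective {r1 p : ℕ} (h : r1 ≤ p) : Function.Injective (emb h) := by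
  intro x y hxy
  apply Subtype.ext
  have h1 := congrArg (fun z : Idx2 p => z.1.1.1) hxy
  have h2 := congrArg (fun z : Idx2 p => z.1.2.1) hxy
  simp [emb] at h1 h2
  exact Prod.ext (Fin.ext h1) (Fin.ext h2)

lemma emb_cond {r1 p : ℕ} (h : r1 ≤ p) (x : Idx2 r1) :
    (emb h x).1.1.1 < r1 ∧ (emb h x).1.2.1 < r1 := ⟨x.1.1.2, x.1.2.2⟩

/-- reconstruct -/
def res {r1 p : ℕ} (q : Idx2 p) (hq : q.1.1.1 < r1 ∧ q.1.2.1 < r1) : Idx2 r1 :=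
  ⟨(⟨q.1.1.1, hq.1⟩, ⟨q.1.2.1, hq.2⟩), q.2⟩

lemma emb_res {r1 p : ℕ} (h : r1 ≤ p) (q : Idx2 p) (hq : q.1.1.1 < r1 ∧ q.1.2.1 < r1) :
    emb h (res q hq) = q := by
  apply Subtype.ext
  exact Prod.ext (Fin.ext rfl) (Fin.ext rfl)

lemma res_emb {r1 p : ℕ} (h : r1 ≤ p) (x : Idx2 r1) :
    res (emb h x) (emb_cond h x) = x := by
  apply Subtype.ext
  exact Prod.ext (Fin.ext rfl) (Fin.ext rfl)

lemma sum_inter {r1 p : ℕ} (h : r1 ≤ p) (F : Idx2 p → ℝ)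
    (h0 : ∀ q : Idx2 p, ¬(q.1.1.1 < r1 ∧ q.1.2.1 < r1) → F q = 0) :
    ∑ q : Idx2 p, F q = ∑ x : Idx2 r1, F (emb h x) := by
  classical
  have himg : ∑ q ∈ (univ : Finset (Idx2 r1)).image (emb h), F q
      = ∑ x : Idx2 r1, F (emb h x) :=
    Finset.sum_image (fun x _ y _ hxy => emb_injective h hxy)
  rw [← himg]
  symm
  apply Finset.sum_subset (Finset.subset_univ _)
  intro q _ hq
  apply h0
  intro hc
  exact hq (Finset.mem_image.2 ⟨res q hc, Finset.mem_univ _, emb_res h q hc⟩)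

def gval (a : ℝ) : Fin 3 → ℝ := fun y => if y = 0 then 0 else if y = 1 then a else -a

lemma gval_injective {a : ℝ} (ha : a ≠ 0) : Function.Injective (gval a) := by
  have ha1 : -a ≠ a := by intro hh; apply ha; linarith
  have ha2 : (0:ℝ) ≠ a := fun hh => ha hh.symm
  have ha3 : (0:ℝ) ≠ -a := by intro hh; apply ha; linarith
  have ha4 : a ≠ -a := by intro hh; apply ha; linarith
  have ha5 : a ≠ 0 := ha
  have ha6 : -a ≠ 0 := by intro hh; apply ha; linarith
  intro y z hyz
  fin_cases y <;> fin_cases z <;>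
    simp_all [gval] <;> rfl

lemma gval_ne_zero {a : ℝ} {y : Fin 3} (h : gval a y ≠ 0) : y ≠ 0 := by
  intro hy; rw [hy] at h; simp [gval] at h

lemma gval_sq (a : ℝ) (y : Fin 3) : (gval a y)^2 = if y ≠ 0 then a^2 else 0 := by
  fin_cases y <;> simp [gval] <;> ring

lemma gval_sep (a : ℝ) (y z : Fin 3) (hyz : y ≠ z) : a^2 ≤ (gval a y - gval a z)^2 := by
  fin_cases y <;> fin_cases z <;>
    first
      | exact absurd rfl hyz
      | (simp [gval] <;> nlinarith [sq_nonneg a])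

lemma card_main_filter {r1 p : ℕ} (h : r1 ≤ p) :
    (univ.filter fun i : Fin p => i.1 < r1).card = r1 := by
  classical
  have : (univ.filter fun i : Fin p => i.1 < r1)
      = Finset.map ⟨Fin.castLE h, Fin.castLE_injective h⟩ univ := by
    ext i
    rw [Finset.mem_filter, Finset.mem_map]
    constructor
    · rintro ⟨-, hi⟩
      exact ⟨⟨i.1, hi⟩, mem_univ _, by ext; rfl⟩
    · rintro ⟨j, -, rfl⟩
      exact ⟨mem_univ _, j.2⟩
  rw [this, Finset.card_map, card_univ, Fintype.card_fin]



noncomputable def betaOf {r1 p : ℕ} (h : r1 ≤ p) (cm a : ℝ) (v : Idx2 r1 → Fin 3) :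
    FullIdx p → ℝ :=
  Sum.elim (fun i => if i.1 < r1 then cm else 0)
    (fun q : Idx2 p => if hq : q.1.1.1 < r1 ∧ q.1.2.1 < r1 then gval a (v (res q hq)) else 0)

lemma betaOf_inl {r1 p : ℕ} (h : r1 ≤ p) (cm a : ℝ) (v : Idx2 r1 → Fin 3) (i : Fin p) :
    betaOf h cm a v (Sum.inl i) = if i.1 < r1 then cm else 0 := rfl

lemma betaOf_inr {r1 p : ℕ} (h : r1 ≤ p) (cm a : ℝ) (v : Idx2 r1 → Fin 3) (q : Idx2 p) :
    betaOf h cm a v (Sum.inr q)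
      = if hq : q.1.1.1 < r1 ∧ q.1.2.1 < r1 then gval a (v (res q hq)) else 0 := rfl

lemma betaOf_emb {r1 p : ℕ} (h : r1 ≤ p) (cm a : ℝ) (v : Idx2 r1 → Fin 3) (x : Idx2 r1) :
    betaOf h cm a v (Sum.inr (emb h x)) = gval a (v x) := by
  rw [betaOf_inr, dif_pos (emb_cond h x), res_emb]

lemma betaOf_injective {r1 p : ℕ} (h : r1 ≤ p) (cm : ℝ) {a : ℝ} (ha : a ≠ 0) :
    Function.Injective (betaOf (p := p) h cm a) := by
  intro v w hvw
  funext x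
  have := congrFun hvw (Sum.inr (emb h x))
  rw [betaOf_emb, betaOf_emb] at this
  exact gval_injective ha this

-- ℓ0 of main effects
lemma l0_main {r1 p : ℕ} (h : r1 ≤ p) (cm a : ℝ) (v : Idx2 r1 → Fin 3) :
    l0 (fun i => betaOf h cm a v (Sum.inl i)) ≤ r1 := by
  rw [l0]
  have hfin : Nat.card (Fin r1) = r1 := by rw [Nat.card_eq_fintype_card, Fintype.card_fin]
  have h1 : Nat.card {i // (fun i => betaOf h cm a v (Sum.inl i)) i ≠ 0}
      ≤ Nat.card (Fin r1) := by
    apply Nat.card_le_card_of_injective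
      (f := fun x : {i // (fun i => betaOf h cm a v (Sum.inl i)) i ≠ 0} =>
        (⟨x.1.1, by
          by_contra hc
          refine x.2 ?_
          show betaOf h cm a v (Sum.inl x.1) = 0
          rw [betaOf_inl, if_neg hc]⟩ : Fin r1))
    intro x y hxy
    have hval : x.1.1 = y.1.1 := by simpa using hxy
    exact Subtype.ext (Fin.ext hval)
  rw [hfin] at h1
  exact h1

-- ℓ0 of interactions: bounded by the weight of v
lemma l0_inter {r1 p : ℕ} (h : r1 ≤ p) (cm a : ℝ) (v : Idx2 r1 → Fin 3) :
    l0 (fun q : Idx2 p => betaOf h cm a v (Sum.inr q))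
      ≤ (univ.filter fun x : Idx2 r1 => v x ≠ 0).card := by
  classical
  rw [l0]
  have hc : Nat.card {x : Idx2 r1 // v x ≠ 0}
      = (univ.filter fun x : Idx2 r1 => v x ≠ 0).card := by
    rw [Nat.card_eq_fintype_card, Fintype.card_subtype]
  rw [← hc]
  have key : ∀ q : {q : Idx2 p // (fun q => betaOf h cm a v (Sum.inr q)) q ≠ 0},
      q.1.1.1.1 < r1 ∧ q.1.1.2.1 < r1 := by
    intro x
    by_contra hcond
    refine x.2 ?_
    show betaOf h cm a v (Sum.inr x.1) = 0
    rw [betaOf_inr, dif_neg hcond]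
  apply Nat.card_le_card_of_injective
    (f := fun x => (⟨res x.1 (key x), by
      have hx : betaOf h cm a v (Sum.inr x.1) ≠ 0 := x.2
      rw [betaOf_inr, dif_pos (key x)] at hx
      exact gval_ne_zero hx⟩ : {x : Idx2 r1 // v x ≠ 0}))
  intro x y hxy
  apply Subtype.ext
  have : res x.1 (key x) = res y.1 (key y) := congrArg Subtype.val hxy
  have h2 := congrArg (emb h) this
  rwa [emb_res, emb_res] at h2

lemma sum_main {r1 p : ℕ} (h : r1 ≤ p) (cm : ℝ) :
    ∑ i : Fin p, (if i.1 < r1 then cm else 0)^2 = cm^2 * r1 := by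
  classical
  have : ∀ i : Fin p, (if i.1 < r1 then cm else 0)^2 = if i.1 < r1 then cm^2 else 0 := by
    intro i; split <;> ring
  rw [Finset.sum_congr rfl (fun i _ => this i), Finset.sum_ite, Finset.sum_const,
      Finset.sum_const_zero, add_zero, nsmul_eq_mul, card_main_filter h]
  ring

lemma sqnorm_split {p : ℕ} (β : FullIdx p → ℝ) :
    sqnorm β = ∑ i : Fin p, (β (Sum.inl i))^2 + ∑ q : Idx2 p, (β (Sum.inr q))^2 := by
  rw [sqnorm, Fintype.sum_sum_type]

lemma sqnorm_betaOf {r1 p : ℕ} (h : r1 ≤ p) (cm a : ℝ) (v : Idx2 r1 → Fin 3) :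
    sqnorm (betaOf h cm a v)
      = cm^2 * r1 + a^2 * (univ.filter fun x : Idx2 r1 => v x ≠ 0).card := by
  classical
  rw [sqnorm_split]
  congr 1
  · rw [← sum_main h cm]
    apply Finset.sum_congr rfl
    intro i _
    rw [betaOf_inl]
  · rw [sum_inter h (fun q => (betaOf h cm a v (Sum.inr q))^2) (by
      intro q hq
      show (betaOf h cm a v (Sum.inr q))^2 = 0
      rw [betaOf_inr, dif_neg hq]
      ring)]
    have : ∀ x : Idx2 r1, (betaOf h cm a v (Sum.inr (emb h x)))^2
        = if v x ≠ 0 then a^2 else 0 := by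
      intro x
      rw [betaOf_emb, gval_sq]
    rw [Finset.sum_congr rfl (fun x _ => this x), Finset.sum_ite, Finset.sum_const,
        Finset.sum_const_zero, add_zero, nsmul_eq_mul]
    ring

lemma sqnorm_diff {r1 p : ℕ} (h : r1 ≤ p) (cm a : ℝ) (v w : Idx2 r1 → Fin 3) :
    a^2 * (univ.filter fun x : Idx2 r1 => v x ≠ w x).card
      ≤ sqnorm (betaOf h cm a v - betaOf h cm a w) := by
  classical
  rw [sqnorm_split]
  have hmain : ∑ i : Fin p, ((betaOf h cm a v - betaOf h cm a w) (Sum.inl i))^2 = 0 := by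
    apply Finset.sum_eq_zero
    intro i _
    have : (betaOf h cm a v - betaOf h cm a w) (Sum.inl i) = 0 := by
      show betaOf h cm a v (Sum.inl i) - betaOf h cm a w (Sum.inl i) = 0
      rw [betaOf_inl, betaOf_inl, sub_self]
    rw [this]; ring
  rw [hmain, zero_add]
  have hsplit : ∑ q : Idx2 p, ((betaOf h cm a v - betaOf h cm a w) (Sum.inr q))^2
      = ∑ x : Idx2 r1, (gval a (v x) - gval a (w x))^2 := by
    rw [sum_inter h _ (by
      intro q hq
      show (betaOf h cm a v (Sum.inr q) - betaOf h cm a w (Sum.inr q))^2 = 0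
      rw [betaOf_inr, betaOf_inr, dif_neg hq, dif_neg hq, sub_self]
      ring)]
    apply Finset.sum_congr rfl
    intro x _
    show (betaOf h cm a v (Sum.inr (emb h x)) - betaOf h cm a w (Sum.inr (emb h x)))^2 = _
    rw [betaOf_emb, betaOf_emb]
  rw [hsplit]
  calc a^2 * ((univ.filter fun x : Idx2 r1 => v x ≠ w x).card : ℝ)
      = ∑ x : Idx2 r1, (if v x ≠ w x then a^2 else 0) := by
        rw [Finset.sum_ite, Finset.sum_const, Finset.sum_const_zero, add_zero, nsmul_eq_mul]
        ring
    _ ≤ ∑ x : Idx2 r1, (gval a (v x) - gval a (w x))^2 := by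
        apply Finset.sum_le_sum
        intro x _
        by_cases hx : v x ≠ w x
        · rw [if_pos hx]
          exact gval_sep a _ _ hx
        · rw [if_neg hx]
          positivity

-- heredity
lemma heredity_betaOf {r1 p : ℕ} (h : r1 ≤ p) {cm : ℝ} (hcm : cm ≠ 0) (a : ℝ)
    (v : Idx2 r1 → Fin 3) (q : Idx2 p) (hq : betaOf h cm a v (Sum.inr q) ≠ 0) :
    betaOf h cm a v (Sum.inl q.1.1) ≠ 0 ∧ betaOf h cm a v (Sum.inl q.1.2) ≠ 0 := by
  have hcond : q.1.1.1 < r1 ∧ q.1.2.1 < r1 := by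
    by_contra hc
    exact hq (by rw [betaOf_inr, dif_neg hc])
  constructor
  · rw [betaOf_inl, if_pos hcond.1]; exact hcm
  · rw [betaOf_inl, if_pos hcond.2]; exact hcm

-- l0 of difference: main part zero
lemma l0_diff_main {r1 p : ℕ} (h : r1 ≤ p) (cm a : ℝ) (v w : Idx2 r1 → Fin 3) :
    l0 (fun i => (betaOf h cm a v - betaOf h cm a w) (Sum.inl i)) = 0 := by
  rw [l0]
  have : IsEmpty {i : Fin p //
      (fun i => (betaOf h cm a v - betaOf h cm a w) (Sum.inl i)) i ≠ 0} := by
    constructor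
    intro x
    apply x.2
    show betaOf h cm a v (Sum.inl x.1) - betaOf h cm a w (Sum.inl x.1) = 0
    rw [betaOf_inl, betaOf_inl, sub_self]
  exact Nat.card_of_isEmpty

lemma l0_diff_inter {r1 p : ℕ} (h : r1 ≤ p) (cm a : ℝ) (v w : Idx2 r1 → Fin 3) :
    l0 (fun q : Idx2 p => (betaOf h cm a v - betaOf h cm a w) (Sum.inr q))
      ≤ (univ.filter fun x : Idx2 r1 => v x ≠ 0).card
        + (univ.filter fun x : Idx2 r1 => w x ≠ 0).card := by
  classical
  rw [l0]
  have hcards : Nat.card ({x : Idx2 r1 // v x ≠ 0} ⊕ {x : Idx2 r1 // w x ≠ 0})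
      = (univ.filter fun x : Idx2 r1 => v x ≠ 0).card
        + (univ.filter fun x : Idx2 r1 => w x ≠ 0).card := by
    rw [Nat.card_sum, Nat.card_eq_fintype_card, Nat.card_eq_fintype_card,
        Fintype.card_subtype, Fintype.card_subtype]
  rw [← hcards]
  have key : ∀ q : {q : Idx2 p //
      (fun q => (betaOf h cm a v - betaOf h cm a w) (Sum.inr q)) q ≠ 0},
      q.1.1.1.1 < r1 ∧ q.1.1.2.1 < r1 := by
    intro x
    by_contra hcond
    apply x.2
    show betaOf h cm a v (Sum.inr x.1) - betaOf h cm a w (Sum.inr x.1) = 0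
    rw [betaOf_inr, betaOf_inr, dif_neg hcond, dif_neg hcond, sub_self]
  have hvw : ∀ q : {q : Idx2 p //
      (fun q => (betaOf h cm a v - betaOf h cm a w) (Sum.inr q)) q ≠ 0},
      v (res q.1 (key q)) ≠ 0 ∨ w (res q.1 (key q)) ≠ 0 := by
    intro x
    by_contra hc
    push_neg at hc
    apply x.2
    show betaOf h cm a v (Sum.inr x.1) - betaOf h cm a w (Sum.inr x.1) = 0
    rw [betaOf_inr, betaOf_inr, dif_pos (key x), dif_pos (key x), hc.1, hc.2, sub_self]
  apply Nat.card_le_card_of_injective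
    (f := fun x => if hx : v (res x.1 (key x)) ≠ 0
      then Sum.inl ⟨res x.1 (key x), hx⟩
      else Sum.inr ⟨res x.1 (key x), (hvw x).resolve_left hx⟩)
  intro x y hxy
  beta_reduce at hxy
  have hres : res x.1 (key x) = res y.1 (key y) := by
    by_cases hx : v (res x.1 (key x)) ≠ 0 <;> by_cases hy : v (res y.1 (key y)) ≠ 0
    · rw [dif_pos hx, dif_pos hy] at hxy
      exact congrArg Subtype.val (Sum.inl_injective hxy)
    · rw [dif_pos hx, dif_neg hy] at hxy
      simp at hxy
    · rw [dif_neg hx, dif_pos hy] at hxy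
      simp at hxy
    · rw [dif_neg hx, dif_neg hy] at hxy
      exact congrArg Subtype.val (Sum.inr_injective hxy)
  apply Subtype.ext
  have h2 := congrArg (emb h) hres
  rwa [emb_res, emb_res] at h2


end LPI


/-- local packing for interaction effects, Case 1 of the lower bound.
Under the SRC with `l1 = r1`, `l2 = r2`, if `2 ≤ r1 ≤ p` and `1 ≤ r2 ≤ (2/3) C(r1,2)`,
then for every `ε > 0` there is a set `G ⊆ B0(r1, r2; strong)` of vectors of norm at most
`ε`, of cardinality at least `exp((r2/2) log((C(r1,2) - r2/2)/r2))`, with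
`n^{-1/2}‖Zβ‖₂ ≤ b2 ε` for all `β ∈ G` and `n^{-1/2}‖Zβ - Zβ'‖₂ ≥ b1 ε/2` for all distinct
`β, β' ∈ G`. -/
theorem local_packing_interactions (n p r1 r2 : ℕ) (b1 b2 : ℝ)
    (Z : Matrix (Fin n) (FullIdx p) ℝ)
    (hn : 0 < n) (hp : 0 < p) (hr1 : 2 ≤ r1) (hr1p : r1 ≤ p) (hr2 : 1 ≤ r2)
    (hr2' : (r2 : ℝ) ≤ 2 / 3 * (r1.choose 2 : ℝ))
    (hb1 : 0 < b1) (hb12 : b1 ≤ b2)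
    (hSRC : SRC n p Z r1 r2 b1 b2) :
    ∀ ε : ℝ, 0 < ε →
      ∃ G : Finset (FullIdx p → ℝ),
        (∀ β ∈ G, β ∈ B0 p r1 r2 strongHeredity ∧ Real.sqrt (sqnorm β) ≤ ε) ∧
        Real.exp ((r2 : ℝ) / 2 *
            Real.log (((r1.choose 2 : ℝ) - (r2 : ℝ) / 2) / (r2 : ℝ))) ≤ (G.card : ℝ) ∧
        (∀ β ∈ G, Real.sqrt (sqnorm (Z.mulVec β)) / Real.sqrt n ≤ b2 * ε) ∧
        ∀ β ∈ G, ∀ β' ∈ G, β ≠ β' →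
          b1 * ε / 2 ≤ Real.sqrt (sqnorm (Z.mulVec β - Z.mulVec β')) / Real.sqrt n := by
  intro ε hε
  classical
  have hr2R : (0:ℝ) < r2 := by exact_mod_cast hr2
  have hr1R : (0:ℝ) < r1 := by exact_mod_cast (by omega : 0 < r1)
  have hCd : 3 * r2 ≤ 2 * (r1.choose 2) := by
    have : (3:ℝ) * r2 ≤ 2 * (r1.choose 2 : ℝ) := by linarith
    exact_mod_cast this
  have hcardI : Fintype.card (Idx2 r1) = r1.choose 2 := LPI.card_pairs r1
  obtain ⟨G0, hwt, hsep, hbig⟩ := LPI.packLemma (ι := Idx2 r1) r2 hr2 (by rw [hcardI]; exact hCd)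
  set a := ε / Real.sqrt (2*r2) with ha
  set cm := ε / Real.sqrt (2*r1) with hcm
  have hapos : 0 < a := div_pos hε (Real.sqrt_pos.2 (by linarith))
  have hcmpos : 0 < cm := div_pos hε (Real.sqrt_pos.2 (by linarith))
  have ha2 : a^2 = ε^2/(2*r2) := by
    rw [ha, div_pow, Real.sq_sqrt (by linarith)]
  have hcm2 : cm^2 = ε^2/(2*r1) := by
    rw [hcm, div_pow, Real.sq_sqrt (by linarith)]
  have hsq : ∀ v ∈ G0, sqnorm (LPI.betaOf hr1p cm a v) = ε^2 := by
    intro v hv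
    rw [LPI.sqnorm_betaOf, hwt v hv, hcm2, ha2]
    field_simp
    ring
  have hsqrt : ∀ v ∈ G0, Real.sqrt (sqnorm (LPI.betaOf hr1p cm a v)) = ε := by
    intro v hv
    rw [hsq v hv, Real.sqrt_sq hε.le]
  have hl0i : ∀ v ∈ G0, l0 (fun q : Idx2 p => LPI.betaOf hr1p cm a v (Sum.inr q)) ≤ r2 := by
    intro v hv
    have := LPI.l0_inter hr1p cm a v
    rwa [hwt v hv] at this
  have hr2C : r2 ≤ r1.choose 2 := by
    have : (r2:ℝ) ≤ (r1.choose 2 : ℝ) := by linarith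
    exact_mod_cast this
  have hr2cp : r2 ≤ p.choose 2 := le_trans hr2C (Nat.choose_le_choose 2 hr1p)
  have hl0cp : ∀ F : Idx2 p → ℝ, l0 F ≤ p.choose 2 := by
    intro F
    rw [l0]
    have h1 : Nat.card {q : Idx2 p // F q ≠ 0} ≤ Nat.card (Idx2 p) :=
      Nat.card_le_card_of_injective Subtype.val Subtype.val_injective
    have h2 : Nat.card (Idx2 p) = p.choose 2 := by
      rw [Nat.card_eq_fintype_card, LPI.card_pairs p]
    rw [h2] at h1
    exact h1
  have hl0main : ∀ v : Idx2 r1 → Fin 3,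
      l0 (fun i => LPI.betaOf hr1p cm a v (Sum.inl i)) ≤ min (2*r1) p :=
    fun v => le_min (le_trans (LPI.l0_main hr1p cm a v) (by omega))
      (le_trans (LPI.l0_main hr1p cm a v) hr1p)
  refine ⟨G0.image (LPI.betaOf hr1p cm a), ?_, ?_, ?_, ?_⟩
  · -- B0 membership and norm bound
    intro β hβ
    obtain ⟨v, hv, rfl⟩ := Finset.mem_image.1 hβ
    refine ⟨⟨?_, ?_, hl0i v hv⟩, le_of_eq (hsqrt v hv)⟩
    · intro q hq
      exact LPI.heredity_betaOf hr1p (ne_of_gt hcmpos) a v q hq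
    · exact LPI.l0_main hr1p cm a v
  · -- cardinality
    have hinj := LPI.betaOf_injective (p := p) hr1p cm (ne_of_gt hapos)
    rw [Finset.card_image_of_injective _ hinj]
    have hcpos : (0:ℝ) < ((r1.choose 2 : ℝ) - (r2:ℝ)/2) / r2 := by
      apply div_pos _ hr2R
      have : (3:ℝ) * r2 ≤ 2 * (r1.choose 2 : ℝ) := by linarith
      linarith
    calc Real.exp ((r2 : ℝ) / 2 * Real.log (((r1.choose 2 : ℝ) - (r2:ℝ)/2) / r2))
        = (((r1.choose 2 : ℝ) - (r2:ℝ)/2) / r2) ^ ((r2:ℝ)/2) := by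
          rw [Real.rpow_def_of_pos hcpos, mul_comm]
      _ ≤ (G0.card : ℝ) := by
          have := hbig
          rwa [hcardI] at this
  · -- upper bound for each β
    intro β hβ
    obtain ⟨v, hv, rfl⟩ := Finset.mem_image.1 hβ
    have h2 : l0 (fun q : Idx2 p => LPI.betaOf hr1p cm a v (Sum.inr q))
        ≤ min (2*r2) (p.choose 2) :=
      le_min (le_trans (hl0i v hv) (by omega)) (le_trans (hl0i v hv) hr2cp)
    have := (hSRC _ (hl0main v) h2).2
    rwa [hsqrt v hv] at this
  · -- separation
    intro β hβ β' hβ' hne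
    obtain ⟨v, hv, rfl⟩ := Finset.mem_image.1 hβ
    obtain ⟨w, hw, rfl⟩ := Finset.mem_image.1 hβ'
    have hvw : v ≠ w := fun hc => hne (congrArg _ hc)
    set δ : FullIdx p → ℝ := LPI.betaOf hr1p cm a v - LPI.betaOf hr1p cm a w with hδ
    have h1 : l0 (fun i => δ (Sum.inl i)) ≤ min (2*r1) p := by
      rw [hδ, LPI.l0_diff_main hr1p cm a v w]
      exact Nat.zero_le _
    have h2 : l0 (fun q : Idx2 p => δ (Sum.inr q)) ≤ min (2*r2) (p.choose 2) := by
      apply le_min _ (hl0cp _)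
      rw [hδ]
      have := LPI.l0_diff_inter hr1p cm a v w
      rw [hwt v hv, hwt w hw] at this
      exact le_trans this (by omega)
    have hSRClow := (hSRC δ h1 h2).1
    -- lower bound on ‖δ‖
    have hdist : (r2:ℝ)/2 ≤ ((Finset.univ.filter fun x : Idx2 r1 => v x ≠ w x).card : ℝ) := by
      have := hsep v hv w hw hvw
      have : (r2:ℝ) ≤ 2 * ((Finset.univ.filter fun x : Idx2 r1 => v x ≠ w x).card : ℝ) := by
        exact_mod_cast this
      linarith
    have hsqδ : ε^2/4 ≤ sqnorm δ := by
      refine le_trans ?_ (LPI.sqnorm_diff hr1p cm a v w)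
      rw [ha2]
      calc ε^2/4 = ε^2/(2*r2) * ((r2:ℝ)/2) := by field_simp; ring
        _ ≤ ε^2/(2*r2) * ((Finset.univ.filter fun x : Idx2 r1 => v x ≠ w x).card : ℝ) := by
            apply mul_le_mul_of_nonneg_left hdist (by positivity)
    have hsqrtδ : ε/2 ≤ Real.sqrt (sqnorm δ) := by
      have := Real.sqrt_le_sqrt hsqδ
      rwa [show ε^2/4 = (ε/2)^2 by ring, Real.sqrt_sq (by positivity)] at this
    have hZδ : Z.mulVec (LPI.betaOf hr1p cm a v) - Z.mulVec (LPI.betaOf hr1p cm a w)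
        = Z.mulVec δ := by
      rw [hδ, Matrix.mulVec_sub]
    rw [hZδ]
    calc b1 * ε / 2 = b1 * (ε/2) := by ring
      _ ≤ b1 * Real.sqrt (sqnorm δ) := mul_le_mul_of_nonneg_left hsqrtδ hb1.le
      _ ≤ Real.sqrt (sqnorm (Z.mulVec δ)) / Real.sqrt n := hSRClow

end
end

section
/- (Local packing for main effects, Case 2 of the lower-bound proof) Let $n, p, r_1$ be positive integers with $2 \le r_1 \le \frac{2}{3} p$, and suppose the design matrix $Z \in \mathbb{R}^{n \times (p + \binom{p}{2})}$ satisfies the Sparse Riesz Condition with $l_1 = r_1$, $l_2 = r_2$ and constants $0 < b_1 \le b_2$. Then for every $\epsilon > 0$ there exists a set $G$ of coefficient vectors $\beta \in B_0(r_1, r_2; \ddot{\mathbb{R}}^p_{strong})$ with $\beta^{(2)} = 0$ and $\|\beta\|_2 \le \epsilon$, such that $|G| \ge \exp\big(\frac{r_1}{2}\log\frac{p - r_1/2}{r_1}\big)$, every $\beta \in G$ satisfies $\frac{1}{\sqrt{n}}\|Z\beta\|_2 \le b_2\epsilon$, and any two distinct $\beta, \beta' \in G$ satisfy $\frac{1}{\sqrt{n}}\|Z\beta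 - Z\beta'\|_2 \ge \frac{b_1\epsilon}{2}$. -/
open MeasureTheory ProbabilityTheory Real

noncomputable section

section AuxPacking
open Finset

/-- Greedy maximal packing: if every "ball" in `C` has cardinality at most `B`,
there is a pairwise-separated subset `A` with `#C ≤ #A * B`. -/
theorem packing_lemma {α : Type*} [DecidableEq α] (bad : α → α → Prop) [DecidableRel bad]
    (B : ℝ) (hB : 0 ≤ B) :
    ∀ (C : Finset α), (∀ c ∈ C, bad c c) → (∀ c ∈ C, ∀ c' ∈ C, bad c c' → bad c' c) →
    (∀ c ∈ C, ((C.filter (fun c' => bad c c')).card : ℝ) ≤ B) →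
    ∃ A ⊆ C, (∀ a ∈ A, ∀ a' ∈ A, a ≠ a' → ¬ bad a a') ∧ (C.card : ℝ) ≤ A.card * B := by
  intro C
  induction C using Finset.strongInduction with
  | _ C ih =>
    intro hrefl hsymm hball
    rcases C.eq_empty_or_nonempty with rfl | ⟨c, hc⟩
    · exact ⟨∅, by simp⟩
    · set ball := C.filter (fun c' => bad c c') with hballdef
      set C' := C \ ball with hC'
      have hssub : C' ⊂ C := by
        apply Finset.sdiff_ssubset ?_ ?_
        · exact Finset.filter_subset _ _
        · exact ⟨c, by simp [hballdef, hc, hrefl c hc]⟩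
      have hC'sub : C' ⊆ C := Finset.sdiff_subset
      obtain ⟨A', hA'sub, hA'sep, hA'card⟩ := ih C' hssub
        (fun x hx => hrefl x (hC'sub hx))
        (fun x hx y hy h => hsymm x (hC'sub hx) y (hC'sub hy) h)
        (fun x hx => le_trans (by
          exact_mod_cast Finset.card_le_card (Finset.filter_subset_filter _ hC'sub))
          (hball x (hC'sub hx)))
      refine ⟨insert c A', ?_, ?_, ?_⟩
      · exact Finset.insert_subset hc (hA'sub.trans hC'sub)
      · intro a ha a' ha' hne
        rcases Finset.mem_insert.mp ha with h1 | h1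
        · rcases Finset.mem_insert.mp ha' with h2 | h2
          · exact absurd (h1.trans h2.symm) hne
          · subst h1
            intro hbad
            have hmem : a' ∈ ball := Finset.mem_filter.mpr ⟨hC'sub (hA'sub h2), hbad⟩
            exact (Finset.mem_sdiff.mp (hA'sub h2)).2 hmem
        · rcases Finset.mem_insert.mp ha' with h2 | h2
          · subst h2
            intro hbad
            have hbad' : bad a' a := hsymm a (hC'sub (hA'sub h1)) a' hc hbad
            have hmem : a ∈ ball := Finset.mem_filter.mpr ⟨hC'sub (hA'sub h1), hbad'⟩
            exact (Finset.mem_sdiff.mp (hA'sub h1)).2 hmem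
          · exact hA'sep a h1 a' h2 hne
      · have hcnotin : c ∉ A' := fun h => (Finset.mem_sdiff.mp (hA'sub h)).2
          (Finset.mem_filter.mpr ⟨hc, hrefl c hc⟩)
        rw [Finset.card_insert_of_notMem hcnotin]
        have hcard : (C.card : ℝ) ≤ (C'.card : ℝ) + B := by
          have hbsub : ball ⊆ C := by rw [hballdef]; exact Finset.filter_subset _ _
          have h3 : (C \ ball).card + ball.card = C.card :=
            Finset.card_sdiff_add_card_eq_card hbsub
          have : C.card ≤ C'.card + ball.card := by rw [hC']; omega
          calc (C.card : ℝ) ≤ (C'.card : ℝ) + (ball.card : ℝ) := by exact_mod_cast this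
            _ ≤ _ := by rw [hballdef]; exact (add_le_add_iff_left _).mpr (hball c hc)
        calc (C.card : ℝ) ≤ (C'.card : ℝ) + B := hcard
          _ ≤ A'.card * B + B := by linarith
          _ = (A'.card + 1 : ℕ) * B := by push_cast; ring


theorem choose_lower (s : ℕ) : ∀ p : ℕ, s ≤ p → (p : ℝ) ^ s ≤ (s : ℝ) ^ s * (p.choose s) := by
  induction s with
  | zero => intro p _; simp
  | succ s ih =>
    intro p hsp
    obtain ⟨q, rfl⟩ : ∃ q, p = q + 1 := ⟨p - 1, by omega⟩
    have hsq : s ≤ q := by omega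
    have hq := ih q hsq
    have hid : ((q:ℝ) + 1) * (q.choose s : ℝ) = ((q+1).choose (s+1) : ℝ) * ((s:ℝ)+1) := by
      exact_mod_cast congrArg (Nat.cast (R := ℝ)) (Nat.add_one_mul_choose_eq q s)
    have hss : (0:ℝ) < (s:ℝ)^s := by
      rcases Nat.eq_zero_or_pos s with rfl | hs
      · norm_num
      · positivity
    have hsp1 : (0:ℝ) < (s:ℝ) + 1 := by positivity
    have hqp1 : (0:ℝ) < (q:ℝ) + 1 := by positivity
    -- key : ((q+1)*s)^s ≤ ((s+1)*q)^s
    have h1 : ((q:ℝ)+1) * s ≤ ((s:ℝ)+1) * q := by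
      have : (s:ℝ) ≤ q := by exact_mod_cast hsq
      nlinarith
    have h2 : (((q:ℝ)+1) * s)^s ≤ (((s:ℝ)+1) * q)^s := by
      apply pow_le_pow_left₀ (by positivity) h1
    -- step A : (q+1)^s * (s+1) * s^s ≤ (s+1)^(s+1) * q^s
    have h3 : ((q:ℝ)+1)^s * ((s:ℝ)+1) * (s:ℝ)^s ≤ ((s:ℝ)+1)^(s+1) * (q:ℝ)^s := by
      calc ((q:ℝ)+1)^s * ((s:ℝ)+1) * (s:ℝ)^s = (((q:ℝ)+1) * s)^s * ((s:ℝ)+1) := by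
            rw [mul_pow]; ring
        _ ≤ (((s:ℝ)+1) * q)^s * ((s:ℝ)+1) := by
            apply mul_le_mul_of_nonneg_right h2 (by positivity)
        _ = ((s:ℝ)+1)^(s+1) * (q:ℝ)^s := by rw [mul_pow]; ring
    -- step B : (s+1)^(s+1) * q^s ≤ (s+1)^(s+1) * (s^s * choose q s)
    have h4 : ((s:ℝ)+1)^(s+1) * (q:ℝ)^s ≤ ((s:ℝ)+1)^(s+1) * ((s:ℝ)^s * (q.choose s : ℝ)) := by
      apply mul_le_mul_of_nonneg_left hq (by positivity)
    -- combine, divide by s^s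
    have h5 : ((q:ℝ)+1)^s * ((s:ℝ)+1) ≤ ((s:ℝ)+1)^(s+1) * (q.choose s : ℝ) := by
      have := h3.trans h4
      have h6 : ((q:ℝ)+1)^s * ((s:ℝ)+1) * (s:ℝ)^s ≤ ((s:ℝ)+1)^(s+1) * (q.choose s : ℝ) * (s:ℝ)^s := by
        calc ((q:ℝ)+1)^s * ((s:ℝ)+1) * (s:ℝ)^s ≤ ((s:ℝ)+1)^(s+1) * ((s:ℝ)^s * (q.choose s:ℝ)) := this
          _ = ((s:ℝ)+1)^(s+1) * (q.choose s : ℝ) * (s:ℝ)^s := by ring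
      exact le_of_mul_le_mul_right h6 hss
    -- multiply by (q+1), use hid
    have h7 : ((q:ℝ)+1)^(s+1) * ((s:ℝ)+1) ≤ ((s:ℝ)+1)^(s+1) * (((q+1).choose (s+1) : ℝ) * ((s:ℝ)+1)) := by
      calc ((q:ℝ)+1)^(s+1) * ((s:ℝ)+1) = (((q:ℝ)+1)^s * ((s:ℝ)+1)) * (((q:ℝ)+1)) := by ring
      _ ≤ (((s:ℝ)+1)^(s+1) * (q.choose s : ℝ)) * ((q:ℝ)+1) := by
          apply mul_le_mul_of_nonneg_right h5 (le_of_lt hqp1)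
      _ = ((s:ℝ)+1)^(s+1) * (((q:ℝ)+1) * (q.choose s:ℝ)) := by ring
      _ = ((s:ℝ)+1)^(s+1) * (((q+1).choose (s+1) : ℝ) * ((s:ℝ)+1)) := by rw [hid]
    have h8 : ((q:ℝ)+1)^(s+1) ≤ ((s:ℝ)+1)^(s+1) * ((q+1).choose (s+1) : ℝ) := by
      have := h7
      have h9 : ((q:ℝ)+1)^(s+1) * ((s:ℝ)+1) ≤ (((s:ℝ)+1)^(s+1) * ((q+1).choose (s+1) : ℝ)) * ((s:ℝ)+1) := by
        calc ((q:ℝ)+1)^(s+1) * ((s:ℝ)+1) ≤ ((s:ℝ)+1)^(s+1) * (((q+1).choose (s+1) : ℝ) * ((s:ℝ)+1)) := h7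
          _ = (((s:ℝ)+1)^(s+1) * ((q+1).choose (s+1) : ℝ)) * ((s:ℝ)+1) := by ring
      exact le_of_mul_le_mul_right h9 hsp1
    push_cast
    exact h8


theorem exp_two_le : Real.exp 2 ≤ 739/100 := by
  have h1 : Real.exp 2 = Real.exp 1 * Real.exp 1 := by
    rw [← Real.exp_add]; norm_num
  have h2 := Real.exp_one_lt_d9
  have h3 := Real.exp_pos 1
  nlinarith

theorem poly_key (σ δ : ℝ) (hσ : 0 ≤ σ) (hδ : 0 ≤ δ) :
    3*(δ*σ^3*(σ+2*δ)^4) ≤ 2*(σ+δ)^8 := by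
  nlinarith [sq_nonneg σ, sq_nonneg δ, mul_nonneg hσ hδ, pow_nonneg hσ 3, pow_nonneg hδ 3,
    mul_nonneg (mul_nonneg (pow_nonneg hσ 7) hδ) hδ,
    mul_nonneg (pow_nonneg hσ 6) (pow_nonneg hδ 2),
    mul_nonneg (pow_nonneg hσ 5) (pow_nonneg hδ 3),
    mul_nonneg (pow_nonneg hσ 4) (pow_nonneg hδ 4),
    mul_nonneg (pow_nonneg hσ 3) (pow_nonneg hδ 5),
    mul_nonneg (pow_nonneg hσ 2) (pow_nonneg hδ 6),
    mul_nonneg hσ (pow_nonneg hδ 7),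
    mul_nonneg (pow_nonneg hσ 7) hδ, pow_nonneg hδ 8, pow_nonneg hσ 8]

theorem base_ineq (σ δ : ℝ) (hσ : 2 ≤ σ) (hδ : 1 ≤ δ) (h2 : σ ≤ 2*δ) :
    ((σ+2*δ)/(2*σ))^4 * (8+7*(σ/(100*δ))^2)^8 * Real.exp 2
      ≤ ((σ+δ)/σ)^8 * 14^8 * (σ/(100*δ)) := by
  have hσ0 : (0:ℝ) < σ := by linarith
  have hδ0 : (0:ℝ) < δ := by linarith
  set t : ℝ := σ/(100*δ) with ht
  have ht0 : 0 < t := by positivity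
  have ht50 : t ≤ 1/50 := by
    rw [ht, div_le_div_iff₀ (by positivity) (by norm_num)]
    linarith
  have htsq : t^2 ≤ 1/2500 := by nlinarith
  have hb1 : (8+7*t^2)^8 ≤ (20007/2500)^8 := by
    apply pow_le_pow_left₀ (by positivity)
    nlinarith
  have hA : (0:ℝ) ≤ ((σ+2*δ)/(2*σ))^4 := by positivity
  have step1 : ((σ+2*δ)/(2*σ))^4 * (8+7*t^2)^8 * Real.exp 2
      ≤ ((σ+2*δ)/(2*σ))^4 * (20007/2500)^8 * (739/100) := by
    have e1 : ((σ+2*δ)/(2*σ))^4 * (8+7*t^2)^8 ≤ ((σ+2*δ)/(2*σ))^4 * (20007/2500)^8 :=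
      mul_le_mul_of_nonneg_left hb1 hA
    have e2 : (0:ℝ) ≤ ((σ+2*δ)/(2*σ))^4 * (8+7*t^2)^8 := by positivity
    calc ((σ+2*δ)/(2*σ))^4 * (8+7*t^2)^8 * Real.exp 2
        ≤ ((σ+2*δ)/(2*σ))^4 * (8+7*t^2)^8 * (739/100) := by
          exact mul_le_mul_of_nonneg_left exp_two_le e2
      _ ≤ ((σ+2*δ)/(2*σ))^4 * (20007/2500)^8 * (739/100) := by
          apply mul_le_mul_of_nonneg_right e1 (by norm_num)
  have key := poly_key σ δ (by linarith) (by linarith)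
  have hσne : σ ≠ 0 := ne_of_gt hσ0
  have hδne : δ ≠ 0 := ne_of_gt hδ0
  have hkey5 : 3*(δ*σ^3*(σ+2*δ)^4) * σ^5 ≤ 2*(σ+δ)^8 * σ^5 :=
    mul_le_mul_of_nonneg_right key (by positivity)
  have step2 : ((σ+2*δ)/(2*σ))^4 * (20007/2500)^8 * (739/100)
      ≤ ((σ+δ)/σ)^8 * 14^8 * t := by
    rw [ht]
    rw [show ((σ+2*δ)/(2*σ))^4 * ((20007:ℝ)/2500)^8 * (739/100)
        = (σ+2*δ)^4 * 20007^8 * 739 / ((2*σ)^4 * 2500^8 * 100) by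
      rw [div_pow]; ring]
    rw [show ((σ+δ)/σ)^8 * (14:ℝ)^8 * (σ/(100*δ))
        = (σ+δ)^8 * 14^8 * σ / (σ^8 * (100*δ)) by
      rw [div_pow]; ring]
    rw [div_le_div_iff₀ (by positivity) (by positivity)]
    have hmono : (0:ℝ) ≤ δ * σ^8 * (σ+2*δ)^4 := by positivity
    nlinarith [hkey5, hmono]
  exact step1.trans step2


def sgn : Option Bool → ℝ
  | none => 0
  | some true => 1
  | some false => -1

def qwt : Option Bool → Option Bool → ℕ
  | none, none => 0
  | none, some _ => 1
  | some _, none => 1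
  | some x, some y => if x = y then 0 else 4

def mwt : Option Bool → Option Bool → ℕ
  | none, none => 0
  | none, some _ => 1
  | some _, none => 0
  | some x, some y => if x = y then 0 else 2

def csupp {p : ℕ} (c : Fin p → Option Bool) : Finset (Fin p) :=
  Finset.univ.filter (fun i => c i ≠ none)

def code (p s : ℕ) : Finset (Fin p → Option Bool) :=
  Finset.univ.filter (fun c => (csupp c).card = s)

def Dwt {p : ℕ} (c₀ c : Fin p → Option Bool) : ℕ := ∑ i, mwt (c₀ i) (c i)

def Qwt {p : ℕ} (c c' : Fin p → Option Bool) : ℕ := ∑ i, qwt (c i) (c' i)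

lemma mem_code {p s : ℕ} {c : Fin p → Option Bool} : c ∈ code p s ↔ (csupp c).card = s := by
  simp [code]

/-- On the code, `Q = 2 D`. -/
lemma Q_eq_2D {p s : ℕ} {c₀ c : Fin p → Option Bool}
    (h₀ : c₀ ∈ code p s) (h : c ∈ code p s) : Qwt c₀ c = 2 * Dwt c₀ c := by
  classical
  have hpt : ∀ a b : Option Bool,
      qwt a b + (if a = none ∧ b ≠ none then 1 else 0)
        = 2 * mwt a b + (if a ≠ none ∧ b = none then 1 else 0) := by decide
  have hsum : Qwt c₀ c + ∑ i, (if c₀ i = none ∧ c i ≠ none then 1 else 0)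
      = 2 * Dwt c₀ c + ∑ i, (if c₀ i ≠ none ∧ c i = none then 1 else 0) := by
    unfold Qwt Dwt
    rw [← Finset.sum_add_distrib, Finset.mul_sum, ← Finset.sum_add_distrib]
    exact Finset.sum_congr rfl (fun i _ => hpt (c₀ i) (c i))
  have h1 : ∑ i, (if c₀ i = none ∧ c i ≠ none then 1 else 0) = (csupp c \ csupp c₀).card := by
    have hset : csupp c \ csupp c₀ = Finset.univ.filter (fun i => c₀ i = none ∧ c i ≠ none) := by
      ext i
      simp [csupp, Finset.mem_sdiff]
      try tauto
    rw [hset, Finset.card_filter]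
  have h2 : ∑ i, (if c₀ i ≠ none ∧ c i = none then 1 else 0) = (csupp c₀ \ csupp c).card := by
    have hset : csupp c₀ \ csupp c = Finset.univ.filter (fun i => c₀ i ≠ none ∧ c i = none) := by
      ext i
      simp [csupp, Finset.mem_sdiff]
      try tauto
    rw [hset, Finset.card_filter]
  have hcards : (csupp c \ csupp c₀).card = (csupp c₀ \ csupp c).card := by
    have e1 := Finset.card_sdiff_add_card_inter (csupp c) (csupp c₀)
    have e2 := Finset.card_sdiff_add_card_inter (csupp c₀) (csupp c)
    rw [Finset.inter_comm] at e2
    rw [mem_code] at h₀ h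
    omega
  rw [h1, h2, hcards] at hsum
  omega

lemma card_csupp_compl {p s : ℕ} {c : Fin p → Option Bool} (h : c ∈ code p s) :
    (Finset.univ.filter (fun i => c i = none)).card = p - s := by
  classical
  have := Finset.card_filter_add_card_filter_not
    (s := (Finset.univ : Finset (Fin p))) (p := fun i => c i = none)
  have hs : (Finset.univ.filter (fun i => ¬ (c i = none))).card = s := mem_code.mp h
  simp only [Finset.card_fin] at this
  omega

/-- Chernoff bound for the ball sums. -/
lemma chernoff {p s : ℕ} (t : ℝ) (ht0 : 0 < t) {c₀ : Fin p → Option Bool}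
    (h₀ : c₀ ∈ code p s) :
    ∑ c ∈ code p s, (7:ℝ)^s * t^(Dwt c₀ c) ≤ (8+7*t^2)^s * (1+14*t)^(p-s) := by
  classical
  set w : Fin p → Option Bool → ℝ :=
    fun i γ => (if γ = none then 1 else 7) * t ^ (mwt (c₀ i) γ) with hw
  have hwnonneg : ∀ i γ, 0 ≤ w i γ := by
    intro i γ
    apply mul_nonneg
    · split <;> norm_num
    · positivity
  have hprod : ∀ c ∈ code p s, ∏ i, w i (c i) = (7:ℝ)^s * t^(Dwt c₀ c) := by
    intro c hc
    rw [Finset.prod_mul_distrib, Finset.prod_pow_eq_pow_sum]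
    have e1 : ∀ i : Fin p, (if c i = none then (1:ℝ) else 7) = 7 ^ (if ¬ (c i = none) then 1 else 0) := by
      intro i
      by_cases hi : c i = none <;> simp [hi]
    rw [Finset.prod_congr rfl (fun i _ => e1 i), Finset.prod_pow_eq_pow_sum,
      ← Finset.card_filter]
    have : (Finset.univ.filter (fun i => ¬ (c i = none))).card = s := mem_code.mp hc
    rw [this]
    rfl
  have hfull : ∑ c : Fin p → Option Bool, ∏ i, w i (c i)
      = (8+7*t^2)^s * (1+14*t)^(p-s) := by
    rw [← Fintype.piFinset_univ, ← Finset.prod_univ_sum]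
    have huniv : (Finset.univ : Finset (Option Bool)) = {none, some true, some false} := by decide
    have hpoint : ∀ i : Fin p, ∑ γ : Option Bool, w i γ
        = if c₀ i = none then 1+14*t else 8+7*t^2 := by
      intro i
      rw [huniv, Finset.sum_insert (by decide), Finset.sum_insert (by decide),
        Finset.sum_singleton]
      rcases h : c₀ i with _|b
      · rw [if_pos rfl]
        simp [hw, h, mwt]
        try ring
      · rw [if_neg (by simp)]
        rcases b <;> simp [hw, h, mwt] <;> try ring
    rw [Finset.prod_congr rfl (fun i _ => hpoint i)]
    have e2 : ∀ i : Fin p, (if c₀ i = none then 1+14*t else 8+7*t^2)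
        = (8+7*t^2) ^ (if ¬ (c₀ i = none) then 1 else 0) * (1+14*t) ^ (if c₀ i = none then 1 else 0) := by
      intro i
      by_cases hi : c₀ i = none <;> simp [hi]
    rw [Finset.prod_congr rfl (fun i _ => e2 i), Finset.prod_mul_distrib,
      Finset.prod_pow_eq_pow_sum, Finset.prod_pow_eq_pow_sum, ← Finset.card_filter,
      ← Finset.card_filter]
    rw [show (Finset.univ.filter (fun i => ¬ (c₀ i = none))).card = s from mem_code.mp h₀,
      card_csupp_compl h₀]
  calc ∑ c ∈ code p s, (7:ℝ)^s * t^(Dwt c₀ c)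
      = ∑ c ∈ code p s, ∏ i, w i (c i) := (Finset.sum_congr rfl hprod).symm
    _ ≤ ∑ c : Fin p → Option Bool, ∏ i, w i (c i) := by
        apply Finset.sum_le_sum_of_subset_of_nonneg (Finset.subset_univ _)
        intro c _ _
        exact Finset.prod_nonneg (fun i _ => hwnonneg i (c i))
    _ = _ := hfull

lemma qwt_symm (a b : Option Bool) : qwt a b = qwt b a := by
  rcases a with _|x <;> rcases b with _|y <;> simp [qwt] <;> rcases x <;> rcases y <;> simp

lemma Qwt_symm {p : ℕ} (c c' : Fin p → Option Bool) : Qwt c c' = Qwt c' c := by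
  unfold Qwt; exact Finset.sum_congr rfl (fun i _ => qwt_symm _ _)

lemma Qwt_self {p : ℕ} (c : Fin p → Option Bool) : Qwt c c = 0 := by
  unfold Qwt
  apply Finset.sum_eq_zero
  intro i _
  rcases h : c i with _|x <;> simp [qwt]

/-- cardinality of the code -/
lemma card_code (p s : ℕ) : (code p s).card = p.choose s * 2^s := by
  classical
  have hE : code p s = (Finset.univ.powersetCard s).biUnion
      (fun S => Fintype.piFinset (fun i => if i ∈ S then ({some true, some false} : Finset (Option Bool)) else {none})) := by
    ext c
    simp only [code, mem_filter, mem_univ, true_and, mem_biUnion, Finset.mem_powersetCard,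
      Fintype.mem_piFinset]
    constructor
    · intro hc
      refine ⟨csupp c, ⟨Finset.subset_univ _, hc⟩, ?_⟩
      intro i
      by_cases hi : c i = none
      · simp [csupp, hi]
      · rcases h : c i with _|b
        · exact absurd h hi
        · rcases b <;> simp [csupp, h] <;> tauto
    · rintro ⟨S, ⟨-, hScard⟩, hc⟩
      have : csupp c = S := by
        ext i
        specialize hc i
        by_cases hi : i ∈ S
        · simp [hi] at hc
          simp [csupp, hi]
          rcases hc with h|h <;> simp [h]
        · simp [hi] at hc
          simp [csupp, hi, hc]
      rw [this, hScard]
  rw [hE, Finset.card_biUnion]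
  · rw [Finset.sum_congr rfl (g := fun _ => 2^s)]
    · rw [Finset.sum_const, Finset.card_powersetCard, Finset.card_fin, smul_eq_mul]
    · intro S hS
      rw [Fintype.card_piFinset]
      have hScard : S.card = s := (Finset.mem_powersetCard.mp hS).2
      calc ∏ i, (if i ∈ S then ({some true, some false} : Finset (Option Bool)) else {none}).card
          = ∏ i, (if i ∈ S then 2 else 1) := by
            apply Finset.prod_congr rfl
            intro i _
            by_cases hi : i ∈ S <;> simp [hi]
        _ = 2^s := by
            rw [← Finset.prod_filter_mul_prod_filter_not Finset.univ (· ∈ S)]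
            rw [Finset.prod_ite_of_true (by intro i hi; exact (mem_filter.mp hi).2),
              Finset.prod_ite_of_false (by intro i hi; exact (mem_filter.mp hi).2)]
            simp only [Finset.prod_const, Finset.prod_const_one, mul_one]
            have hfS : (Finset.univ.filter (· ∈ S)) = S := by ext i; simp
            rw [hfS, hScard, one_pow, mul_one]
  · intro S hS S' hS' hne
    simp only [Finset.disjoint_left]
    intro c hc hc'
    apply hne
    have h1 : ∀ i, c i ∈ (if i ∈ S then ({some true, some false} : Finset (Option Bool)) else {none}) :=
      Fintype.mem_piFinset.mp hc
    have h2 : ∀ i, c i ∈ (if i ∈ S' then ({some true, some false} : Finset (Option Bool)) else {none}) :=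
      Fintype.mem_piFinset.mp hc'
    ext i
    specialize h1 i; specialize h2 i
    by_cases hi : i ∈ S <;> by_cases hi' : i ∈ S' <;> simp [hi, hi'] at h1 h2 ⊢
    · rcases h1 with h|h <;> rw [h] at h2 <;> simp at h2
    · rcases h2 with h|h <;> rw [h] at h1 <;> simp at h1

/-- The main counting theorem: a separated code of exponential size. -/
theorem code_packing (p s : ℕ) (hs : 2 ≤ s) (h3 : 3*s ≤ 2*p) :
    ∃ A ⊆ code p s, (∀ c ∈ A, ∀ c' ∈ A, c ≠ c' → ¬ (Qwt c c' < (s+3)/4)) ∧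
      Real.exp ((s:ℝ)/2 * Real.log (((p:ℝ) - s/2)/s)) ≤ (A.card : ℝ) := by
  classical
  set d : ℕ := p - s with hd
  have hdp : p = s + d := by omega
  have hd1 : 1 ≤ d := by omega
  have hs2d : s ≤ 2*d := by omega
  have hsp : s ≤ p := by omega
  set σ : ℝ := (s:ℝ) with hσdef
  set δ : ℝ := (d:ℝ) with hδdef
  have hσ2 : 2 ≤ σ := by rw [hσdef]; exact_mod_cast hs
  have hδ1 : 1 ≤ δ := by rw [hδdef]; exact_mod_cast hd1
  have hσ2δ : σ ≤ 2*δ := by rw [hσdef, hδdef]; exact_mod_cast hs2d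
  have hσ0 : 0 < σ := by linarith
  have hδ0 : 0 < δ := by linarith
  set t : ℝ := σ/(100*δ) with ht
  have ht0 : 0 < t := by positivity
  have ht1 : t ≤ 1 := by
    rw [ht, div_le_one (by positivity)]
    linarith
  set K : ℕ := ((s+3)/4 - 1)/2 with hK
  have h8K : 8*K ≤ s := by omega
  set Bn : ℝ := (8+7*t^2)^s * (1+14*t)^(p-s) with hBn
  set Bd : ℝ := 7^s * t^K with hBd
  have hBn0 : 0 < Bn := by positivity
  have hBd0 : 0 < Bd := by positivity
  set B : ℝ := Bn / Bd with hB
  have hB0 : 0 ≤ B := by positivity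
  -- balls are small
  have hball : ∀ c₀ ∈ code p s,
      (((code p s).filter (fun c => Qwt c₀ c < (s+3)/4)).card : ℝ) ≤ B := by
    intro c₀ h₀
    rw [hB, le_div_iff₀ hBd0]
    calc (((code p s).filter (fun c => Qwt c₀ c < (s+3)/4)).card : ℝ) * Bd
        = ∑ _c ∈ (code p s).filter (fun c => Qwt c₀ c < (s+3)/4), Bd := by
          rw [Finset.sum_const, nsmul_eq_mul]
      _ ≤ ∑ c ∈ (code p s).filter (fun c => Qwt c₀ c < (s+3)/4), (7:ℝ)^s * t^(Dwt c₀ c) := by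
          apply Finset.sum_le_sum
          intro c hc
          have hcc := Finset.mem_filter.mp hc
          have hQ : Qwt c₀ c = 2 * Dwt c₀ c := Q_eq_2D h₀ hcc.1
          have hDK : Dwt c₀ c ≤ K := by omega
          rw [hBd]
          apply mul_le_mul_of_nonneg_left _ (by positivity)
          exact pow_le_pow_of_le_one ht0.le ht1 hDK
      _ ≤ ∑ c ∈ code p s, (7:ℝ)^s * t^(Dwt c₀ c) := by
          apply Finset.sum_le_sum_of_subset_of_nonneg (Finset.filter_subset _ _)
          intro c _ _
          positivity
      _ ≤ Bn := chernoff t ht0 h₀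
  obtain ⟨A, hAsub, hAsep, hAcard⟩ := packing_lemma (fun c c' => Qwt c c' < (s+3)/4) B hB0
    (code p s)
    (fun c _ => by show Qwt c c < (s+3)/4; rw [Qwt_self]; omega)
    (fun c _ c' _ h => by change Qwt c c' < (s+3)/4 at h; show Qwt c' c < (s+3)/4; rwa [Qwt_symm])
    hball
  refine ⟨A, hAsub, hAsep, ?_⟩
  -- now the numeric bound
  set R : ℝ := ((p:ℝ) - s/2)/s with hR
  have hRform : R = (σ+2*δ)/(2*σ) := by
    rw [hR, hdp]
    push_cast
    field_simp
    ring
  have hR1 : 1 ≤ R := by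
    rw [hRform, le_div_iff₀ (by positivity)]
    linarith
  have hR0 : 0 < R := by linarith
  set M : ℝ := Real.exp ((s:ℝ)/2 * Real.log R) with hM
  have hM0 : 0 < M := Real.exp_pos _
  set N : ℝ := ((p.choose s : ℕ) : ℝ) * 2^s with hN
  have hN0 : 0 < N := by
    rw [hN]
    apply mul_pos _ (by positivity)
    exact_mod_cast Nat.choose_pos hsp
  -- key numeric inequality : M * Bn ≤ N * Bd
  have hkey : M * Bn ≤ N * Bd := by
    have hMBn0 : 0 ≤ M * Bn := by positivity
    have hNBd0 : 0 ≤ N * Bd := by positivity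
    rw [← pow_le_pow_iff_left₀ hMBn0 hNBd0 (n := 8) (by norm_num)]
    have hM8 : M^8 = R^(4*s) := by
      rw [hM, ← Real.exp_nat_mul]
      rw [show ((8:ℕ):ℝ) * ((s:ℝ)/2 * Real.log R) = ((4*s : ℕ):ℝ) * Real.log R by push_cast; ring]
      rw [Real.exp_nat_mul, Real.exp_log hR0]
    have hexp : (1+14*t)^(8*(p-s)) ≤ (Real.exp 2)^s := by
      calc (1+14*t)^(8*(p-s)) ≤ (Real.exp (14*t))^(8*(p-s)) := by
            apply pow_le_pow_left₀ (by positivity)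
            have := Real.add_one_le_exp (14*t)
            linarith
        _ = Real.exp ((8*(p-s) : ℕ) * (14*t)) := by rw [Real.exp_nat_mul]
        _ ≤ Real.exp ((s:ℕ) * 2) := by
            apply Real.exp_le_exp.mpr
            have : ((8*(p-s):ℕ):ℝ) * (14*t) = (28/25) * σ := by
              rw [ht]
              push_cast
              rw [hdp, Nat.add_sub_cancel_left]
              push_cast
              field_simp
              ring
            rw [this]
            push_cast
            linarith
        _ = (Real.exp 2)^s := by rw [Real.exp_nat_mul]
    have htK : t^s ≤ t^(8*K) := pow_le_pow_of_le_one ht0.le ht1 h8K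
    have hchoose : ((p:ℝ)/σ)^s ≤ ((p.choose s : ℕ) : ℝ) := by
      have := choose_lower s p hsp
      rw [div_pow, div_le_iff₀ (by positivity)]
      linarith [this]
    have hbase := base_ineq σ δ hσ2 hδ1 hσ2δ
    -- assemble
    have lhs_eq : (M*Bn)^8 = R^(4*s) * ((8+7*t^2)^8)^s * ((1+14*t)^(8*(p-s))) := by
      rw [mul_pow, hM8, hBn, mul_pow]
      rw [← pow_mul ((8:ℝ)+7*t^2) s 8, ← pow_mul ((1:ℝ)+14*t) (p-s) 8,
        Nat.mul_comm s 8, Nat.mul_comm (p-s) 8, pow_mul ((8:ℝ)+7*t^2) 8 s]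
      ring
    have rhs_eq : (N*Bd)^8 = (((p.choose s:ℕ):ℝ))^8 * (2^8)^s * (7^8)^s * t^(8*K) := by
      rw [hN, hBd, mul_pow, mul_pow, mul_pow]
      rw [← pow_mul (2:ℝ) s 8, ← pow_mul (7:ℝ) s 8, ← pow_mul t K 8,
        Nat.mul_comm s 8, Nat.mul_comm K 8, pow_mul (2:ℝ) 8 s, pow_mul (7:ℝ) 8 s]
      ring
    rw [lhs_eq, rhs_eq]
    calc R^(4*s) * ((8+7*t^2)^8)^s * ((1+14*t)^(8*(p-s)))
        ≤ (R^4)^s * ((8+7*t^2)^8)^s * (Real.exp 2)^s := by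
          rw [pow_mul]
          apply mul_le_mul_of_nonneg_left hexp (by positivity)
      _ = (R^4 * (8+7*t^2)^8 * Real.exp 2)^s := by rw [mul_pow, mul_pow]
      _ ≤ (((p:ℝ)/σ)^8 * 14^8 * t)^s := by
          apply pow_le_pow_left₀ (by positivity)
          have : ((p:ℝ)/σ) = (σ+δ)/σ := by rw [hdp]; push_cast; rw [hσdef, hδdef]
          rw [this, hRform]
          exact hbase
      _ = (((p:ℝ)/σ)^8)^s * (14^8)^s * t^s := by rw [mul_pow, mul_pow]
      _ ≤ (((p.choose s:ℕ):ℝ))^8 * (14^8)^s * t^(8*K) := by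
          apply mul_le_mul
          · apply mul_le_mul_of_nonneg_right _ (by positivity)
            rw [← pow_mul, mul_comm 8 s, pow_mul]
            exact pow_le_pow_left₀ (by positivity) hchoose 8
          · exact htK
          · positivity
          · positivity
      _ = (((p.choose s:ℕ):ℝ))^8 * (2^8)^s * (7^8)^s * t^(8*K) := by
          rw [show (14:ℝ)^8 = 2^8 * 7^8 by norm_num, mul_pow]
          ring
  -- conclude
  have hBpos : 0 < B := by positivity
  have hNcode : ((code p s).card : ℝ) = N := by
    rw [card_code, hN]
    push_cast
    ring
  have hMN : M ≤ N / B := by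
    rw [hB, div_div_eq_mul_div, le_div_iff₀ hBn0]
    calc M * Bn ≤ N * Bd := hkey
      _ = N * Bd := rfl
  have hNA : N / B ≤ (A.card : ℝ) := by
    rw [div_le_iff₀ hBpos]
    rw [← hNcode]
    exact hAcard
  exact hMN.trans hNA

-- sign lemmas
lemma sgn_eq_zero_iff (x : Option Bool) : sgn x = 0 ↔ x = none := by
  rcases x with _|b
  · simp [sgn]
  · rcases b <;> simp [sgn]

lemma sgn_inj : ∀ x y : Option Bool, sgn x = sgn y → x = y := by
  intro x y h
  rcases x with _ | b <;> rcases y with _ | b' <;>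
    first
      | rfl
      | (rcases b <;> rcases b' <;> first | rfl | (norm_num [sgn] at h))
      | (rcases b <;> norm_num [sgn] at h)
      | (rcases b' <;> norm_num [sgn] at h)

lemma sgn_sq (x : Option Bool) : sgn x ^ 2 = if x ≠ none then (1:ℝ) else 0 := by
  rcases x with _|b
  · simp [sgn]
  · rcases b <;> simp [sgn] <;> norm_num

lemma sgn_sub_sq (x y : Option Bool) : (sgn x - sgn y)^2 = (qwt x y : ℝ) := by
  rcases x with _|bx <;> rcases y with _|by'
  · simp [sgn, qwt]
  · rcases by' <;> simp [sgn, qwt] <;> norm_num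
  · rcases bx <;> simp [sgn, qwt] <;> norm_num
  · rcases bx <;> rcases by' <;> simp [sgn, qwt] <;> norm_num

lemma l0_eq_card_filter {ι : Type*} [Fintype ι] (v : ι → ℝ) [DecidablePred (fun i => v i ≠ 0)] :
    l0 v = (Finset.univ.filter (fun i => v i ≠ 0)).card := by
  rw [l0, Nat.card_eq_fintype_card]
  convert Fintype.card_subtype (fun i => v i ≠ 0)


/-- local packing for main effects, Case 2 of the lower bound.
Under the SRC with `l1 = r1`, `l2 = r2`, if `2 ≤ r1 ≤ (2/3) p`, then for every `ε > 0`
there is a set `G ⊆ B0(r1, r2; strong)` of vectors with vanishing interaction part and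
norm at most `ε`, of cardinality at least `exp((r1/2) log((p - r1/2)/r1))`, with
`n^{-1/2}‖Zβ‖₂ ≤ b2 ε` for all `β ∈ G` and `n^{-1/2}‖Zβ - Zβ'‖₂ ≥ b1 ε/2` for all distinct
`β, β' ∈ G`. -/
theorem local_packing_main_effects (n p r1 r2 : ℕ) (b1 b2 : ℝ)
    (Z : Matrix (Fin n) (FullIdx p) ℝ)
    (hn : 0 < n) (hp : 0 < p) (hr1 : 2 ≤ r1) (hr1p : (r1 : ℝ) ≤ 2 / 3 * (p : ℝ))
    (hb1 : 0 < b1) (hb12 : b1 ≤ b2)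
    (hSRC : SRC n p Z r1 r2 b1 b2) :
    ∀ ε : ℝ, 0 < ε →
      ∃ G : Finset (FullIdx p → ℝ),
        (∀ β ∈ G, β ∈ B0 p r1 r2 strongHeredity ∧ (∀ q : Idx2 p, β (Sum.inr q) = 0) ∧
          Real.sqrt (sqnorm β) ≤ ε) ∧
        Real.exp ((r1 : ℝ) / 2 *
            Real.log (((p : ℝ) - (r1 : ℝ) / 2) / (r1 : ℝ))) ≤ (G.card : ℝ) ∧
        (∀ β ∈ G, Real.sqrt (sqnorm (Z.mulVec β)) / Real.sqrt n ≤ b2 * ε) ∧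
        ∀ β ∈ G, ∀ β' ∈ G, β ≠ β' →
          b1 * ε / 2 ≤ Real.sqrt (sqnorm (Z.mulVec β - Z.mulVec β')) / Real.sqrt n := by

  classical
  intro ε hε
  have h32 : 3 * r1 ≤ 2 * p := by
    have h : (3:ℝ) * r1 ≤ 2 * p := by push_cast; linarith
    exact_mod_cast h
  have hr1p' : r1 ≤ p := by omega
  have hr10 : 0 < r1 := by omega
  have hsR : (0:ℝ) < (r1:ℝ) := by exact_mod_cast hr10
  have hsqrt : (0:ℝ) < Real.sqrt r1 := Real.sqrt_pos.mpr hsR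
  set a : ℝ := ε / Real.sqrt r1 with ha
  have ha0 : 0 < a := by positivity
  have hasq : a^2 = ε^2 / r1 := by
    rw [ha, div_pow, Real.sq_sqrt hsR.le]
  obtain ⟨A, hAsub, hAsep, hAcard⟩ := code_packing p r1 hr1 h32
  set vec : (Fin p → Option Bool) → (FullIdx p → ℝ) :=
    fun c => Sum.elim (fun i => a * sgn (c i)) (fun _ => 0) with hvec
  have hvecinj : Function.Injective vec := by
    intro c c' h
    funext i
    have := congrFun h (Sum.inl i)
    simp only [hvec, Sum.elim_inl] at this
    exact sgn_inj _ _ (mul_left_cancel₀ (ne_of_gt ha0) this)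
  -- support-related facts
  have hl0main : ∀ c, l0 (fun i => vec c (Sum.inl i)) = (csupp c).card := by
    intro c
    rw [show (fun i => vec c (Sum.inl i)) = (fun i => a * sgn (c i)) from rfl,
      l0_eq_card_filter]
    congr 1
    ext i
    simp only [Finset.mem_filter, Finset.mem_univ, true_and, csupp]
    constructor
    · intro hne h0
      exact hne (by rw [(sgn_eq_zero_iff _).mpr h0, mul_zero])
    · intro hne h0
      exact hne ((sgn_eq_zero_iff _).mp (by
        rcases mul_eq_zero.mp h0 with h0 | h0
        · exact absurd h0 (ne_of_gt ha0)
        · exact h0))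
  have hl0inter : ∀ c, l0 (fun q : Idx2 p => vec c (Sum.inr q)) = 0 := by
    intro c
    rw [show (fun q : Idx2 p => vec c (Sum.inr q)) = (fun _ => (0:ℝ)) from rfl]
    rw [l0]
    have : IsEmpty {q : Idx2 p // (0:ℝ) ≠ 0} := ⟨fun ⟨q, h⟩ => h rfl⟩
    exact Nat.card_of_isEmpty
  -- sqnorm of a codeword vector
  have hsq1 : ∀ c ∈ code p r1, sqnorm (vec c) = ε^2 := by
    intro c hc
    rw [sqnorm, Fintype.sum_sum_type]
    have h2 : ∀ q : Idx2 p, (vec c (Sum.inr q))^2 = 0 := fun q => by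
      simp [hvec]
    rw [Finset.sum_congr rfl (fun q _ => h2 q), Finset.sum_const, smul_zero, add_zero]
    have h1 : ∀ i : Fin p, (vec c (Sum.inl i))^2 = a^2 * (if c i ≠ none then (1:ℝ) else 0) := by
      intro i
      simp only [hvec, Sum.elim_inl, mul_pow]
      rw [sgn_sq]
    rw [Finset.sum_congr rfl (fun i _ => h1 i), ← Finset.mul_sum]
    rw [Finset.sum_boole]
    have : (Finset.univ.filter (fun i => c i ≠ none)).card = r1 := mem_code.mp hc
    rw [show Finset.filter (fun i => c i ≠ none) Finset.univ
        = Finset.filter (fun i => ¬ (c i = none)) Finset.univ from rfl] at this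
    rw [this, hasq]
    field_simp
  -- sqnorm of a difference
  have hsq2 : ∀ c c', sqnorm (vec c - vec c') = a^2 * (Qwt c c' : ℝ) := by
    intro c c'
    rw [sqnorm, Fintype.sum_sum_type]
    have h2 : ∀ q : Idx2 p, ((vec c - vec c') (Sum.inr q))^2 = 0 := fun q => by
      simp [hvec]
    rw [Finset.sum_congr rfl (fun q _ => h2 q), Finset.sum_const, smul_zero, add_zero]
    have h1 : ∀ i : Fin p, ((vec c - vec c') (Sum.inl i))^2
        = a^2 * (qwt (c i) (c' i) : ℝ) := by
      intro i
      have : (vec c - vec c') (Sum.inl i) = a * (sgn (c i) - sgn (c' i)) := by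
        simp only [Pi.sub_apply, hvec, Sum.elim_inl]
        ring
      rw [this, mul_pow, sgn_sub_sq]
    rw [Finset.sum_congr rfl (fun i _ => h1 i), ← Finset.mul_sum]
    congr 1
    rw [Qwt]
    push_cast
    rfl
  -- SRC hypotheses for single codewords and differences
  have hl0cond1 : ∀ c ∈ code p r1, l0 (fun i => vec c (Sum.inl i)) ≤ min (2*r1) p := by
    intro c hc
    rw [hl0main c, mem_code.mp hc]
    exact le_min (by omega) hr1p'
  have hl0cond2 : ∀ c, l0 (fun q : Idx2 p => vec c (Sum.inr q)) ≤ min (2*r2) (p.choose 2) := by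
    intro c
    rw [hl0inter c]
    exact Nat.zero_le _
  refine ⟨A.image vec, ?_, ?_, ?_, ?_⟩
  · -- membership properties
    intro β hβ
    obtain ⟨c, hcA, rfl⟩ := Finset.mem_image.mp hβ
    have hc : c ∈ code p r1 := hAsub hcA
    refine ⟨⟨?_, ?_, ?_⟩, fun q => rfl, ?_⟩
    · intro q hq
      exact absurd rfl hq
    · rw [hl0main c, mem_code.mp hc]
    · rw [hl0inter c]
      exact Nat.zero_le _
    · rw [hsq1 c hc, Real.sqrt_sq hε.le]
  · -- cardinality
    rw [Finset.card_image_of_injective _ hvecinj]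
    exact hAcard
  · -- upper bound
    intro β hβ
    obtain ⟨c, hcA, rfl⟩ := Finset.mem_image.mp hβ
    have hc : c ∈ code p r1 := hAsub hcA
    have := (hSRC (vec c) (hl0cond1 c hc) (hl0cond2 c)).2
    calc Real.sqrt (sqnorm (Z.mulVec (vec c))) / Real.sqrt n
        ≤ b2 * Real.sqrt (sqnorm (vec c)) := this
      _ = b2 * ε := by rw [hsq1 c hc, Real.sqrt_sq hε.le]
  · -- separation lower bound
    intro β hβ β' hβ' hne
    obtain ⟨c, hcA, rfl⟩ := Finset.mem_image.mp hβ
    obtain ⟨c', hc'A, rfl⟩ := Finset.mem_image.mp hβ'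
    have hc : c ∈ code p r1 := hAsub hcA
    have hc' : c' ∈ code p r1 := hAsub hc'A
    have hcc' : c ≠ c' := fun h => hne (by rw [h])
    have hQ : (r1+3)/4 ≤ Qwt c c' := le_of_not_gt (hAsep c hcA c' hc'A hcc')
    -- SRC applied to the difference
    have hl0diff : l0 (fun i => (vec c - vec c') (Sum.inl i)) ≤ min (2*r1) p := by
      apply le_min
      · have hsub : Finset.univ.filter
            (fun i => (vec c - vec c') (Sum.inl i) ≠ 0)
            ⊆ (csupp c) ∪ (csupp c') := by
          intro i hi
          have hi' := (Finset.mem_filter.mp hi).2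
          rw [Finset.mem_union]
          by_contra hcon
          push_neg at hcon
          simp only [csupp, Finset.mem_filter, Finset.mem_univ, true_and, not_not] at hcon
          apply hi'
          simp only [Pi.sub_apply, hvec, Sum.elim_inl, hcon.1, hcon.2]
          simp [sgn]
        calc l0 (fun i => (vec c - vec c') (Sum.inl i))
            = (Finset.univ.filter (fun i => (vec c - vec c') (Sum.inl i) ≠ 0)).card :=
              l0_eq_card_filter _
          _ ≤ ((csupp c) ∪ (csupp c')).card := Finset.card_le_card hsub
          _ ≤ (csupp c).card + (csupp c').card := Finset.card_union_le _ _
          _ ≤ 2 * r1 := by rw [mem_code.mp hc, mem_code.mp hc']; omega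
      · calc l0 (fun i => (vec c - vec c') (Sum.inl i))
            = Nat.card {i : Fin p // (vec c - vec c') (Sum.inl i) ≠ 0} := rfl
          _ ≤ Fintype.card (Fin p) := by
              rw [Nat.card_eq_fintype_card]
              exact Fintype.card_subtype_le _
          _ = p := Fintype.card_fin p
    have hl0diff2 : l0 (fun q : Idx2 p => (vec c - vec c') (Sum.inr q)) ≤ min (2*r2) (p.choose 2) := by
      have : (fun q : Idx2 p => (vec c - vec c') (Sum.inr q)) = (fun _ => (0:ℝ)) := by
        funext q
        simp [hvec]
      rw [this, l0]
      have : IsEmpty {q : Idx2 p // (0:ℝ) ≠ 0} := ⟨fun ⟨q, h⟩ => h rfl⟩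
      rw [Nat.card_of_isEmpty]
      exact Nat.zero_le _
    have hsrc := (hSRC (vec c - vec c') hl0diff hl0diff2).1
    have hnorm : ε/2 ≤ Real.sqrt (sqnorm (vec c - vec c')) := by
      rw [hsq2 c c']
      have hQr : (r1:ℝ)/4 ≤ ((Qwt c c' : ℕ) : ℝ) := by
        have h4 : r1 ≤ 4 * ((r1+3)/4) := by omega
        have : r1 ≤ 4 * Qwt c c' := by omega
        have := (Nat.cast_le (α := ℝ)).mpr this
        push_cast at this
        linarith
      have hge : ε^2/4 ≤ a^2 * ((Qwt c c' : ℕ) : ℝ) := by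
        rw [hasq, div_mul_eq_mul_div, div_le_div_iff₀ (by norm_num) hsR]
        nlinarith [mul_le_mul_of_nonneg_left hQr (sq_nonneg ε)]
      calc ε/2 = Real.sqrt ((ε/2)^2) := (Real.sqrt_sq (by positivity)).symm
        _ ≤ Real.sqrt (a^2 * ((Qwt c c' : ℕ) : ℝ)) := by
            apply Real.sqrt_le_sqrt
            calc (ε/2)^2 = ε^2/4 := by ring
              _ ≤ _ := hge
    have hfinal : b1 * (ε/2) ≤ Real.sqrt (sqnorm (Z.mulVec (vec c - vec c'))) / Real.sqrt n := by
      calc b1 * (ε/2) ≤ b1 * Real.sqrt (sqnorm (vec c - vec c')) := by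
            apply mul_le_mul_of_nonneg_left hnorm hb1.le
        _ ≤ _ := hsrc
    rw [show Z.mulVec (vec c) - Z.mulVec (vec c') = Z.mulVec (vec c - vec c') from
      (Matrix.mulVec_sub Z _ _).symm]
    calc b1 * ε / 2 = b1 * (ε/2) := by ring
      _ ≤ _ := hfinal

end AuxPacking

end
end
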